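/- arXiv:math-ph/0611079 — 6 statements merged into one kernel-verified Lean document; each statement's English description precedes it below -/
import Mathlib

section
/- Let d, N ≥ 1, let W ⊆ ℝ^d × ℝ^N be open with coordinates (w, z), z = (z_1, …, z_N), and let p, F_1, …, F_N : W → ℝ be smooth. The following are equivalent: (i) for every a ∈ {1, …, N}, F_a = ∂_{z_a}( p + Σ_{b=1}^{N} z_b F_b ) on W (equivalently, ∂_{z_a} p + Σ_{b} z_b ∂_{z_a} F_b = 0 on W for every a); (ii) there exists a smooth function L : W → ℝ such that F_a = ∂_{z_a} L for every a and p = L − Σ_{a} z_a ∂_{z_a} L on W. Moreover, if (i) holds, then for every smooth L : W → ℝ satisfying F_a = ∂_{z_a} L for all a, the function p − ( L − Σ_a z_a ∂_{z_a} L ) has vanishing partial derivatives with respect to all variables z_a. -/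
/-- On an open set `W ⊆ ℝ^d × ℝ^N` with coordinates `(w, z)`,
for smooth `p, F_1, …, F_N : W → ℝ`, the condition
`F_a = ∂_{z_a}(p + Σ_b z_b F_b)` on `W` for all `a` (vanishing of the second
contact form) is equivalent to the existence of a smooth `L : W → ℝ` with
`F_a = ∂_{z_a} L` and `p = L − Σ_a z_a ∂_{z_a} L` on `W` (semi-Lagrangian form);
moreover, under the first condition, for every smooth `L` with `F_a = ∂_{z_a} L`
the function `p − (L − Σ_a z_a ∂_{z_a} L)` has vanishing `z`-partials on `W`. -/
theorem second_contact_form_vanishes_iff_semi_lagrangian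
    (d N : ℕ) (hd : 1 ≤ d) (hN : 1 ≤ N)
    (W : Set ((Fin d → ℝ) × (Fin N → ℝ))) (hW : IsOpen W)
    (p : (Fin d → ℝ) × (Fin N → ℝ) → ℝ)
    (F : Fin N → (Fin d → ℝ) × (Fin N → ℝ) → ℝ)
    (hp : ContDiffOn ℝ (⊤ : ℕ∞) p W)
    (hF : ∀ a, ContDiffOn ℝ (⊤ : ℕ∞) (F a) W) :
    ((∀ a : Fin N, ∀ x ∈ W,
        F a x = fderiv ℝ (fun q => p q + ∑ b, q.2 b * F b q) x
          ((0 : Fin d → ℝ), Pi.single a 1)) ↔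
      (∃ L : (Fin d → ℝ) × (Fin N → ℝ) → ℝ, ContDiffOn ℝ (⊤ : ℕ∞) L W ∧
        (∀ a : Fin N, ∀ x ∈ W,
          F a x = fderiv ℝ L x ((0 : Fin d → ℝ), Pi.single a 1)) ∧
        (∀ x ∈ W,
          p x = L x - ∑ a, x.2 a * fderiv ℝ L x ((0 : Fin d → ℝ), Pi.single a 1)))) ∧
    ((∀ a : Fin N, ∀ x ∈ W,
        F a x = fderiv ℝ (fun q => p q + ∑ b, q.2 b * F b q) x
          ((0 : Fin d → ℝ), Pi.single a 1)) →
      ∀ L : (Fin d → ℝ) × (Fin N → ℝ) → ℝ, ContDiffOn ℝ (⊤ : ℕ∞) L W →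
        (∀ a : Fin N, ∀ x ∈ W,
          F a x = fderiv ℝ L x ((0 : Fin d → ℝ), Pi.single a 1)) →
        ∀ a : Fin N, ∀ x ∈ W,
          fderiv ℝ (fun q => p q - (L q - ∑ b, q.2 b *
              fderiv ℝ L q ((0 : Fin d → ℝ), Pi.single b 1))) x
            ((0 : Fin d → ℝ), Pi.single a 1) = 0) := by
  -- The Lagrangian candidate `G = p + Σ z_b F_b`.
  set G : (Fin d → ℝ) × (Fin N → ℝ) → ℝ := fun q => p q + ∑ b, q.2 b * F b q with hGdef
  have hz : ∀ b : Fin N,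
      Differentiable ℝ (fun q : (Fin d → ℝ) × (Fin N → ℝ) => q.2 b) := by
    intro b
    exact (differentiable_apply b).comp (differentiable_snd : Differentiable ℝ (Prod.snd : (Fin d → ℝ) × (Fin N → ℝ) → Fin N → ℝ))
  have hGdiff : ∀ x ∈ W, DifferentiableAt ℝ G x := by
    intro x hx
    have hx' : W ∈ nhds x := hW.mem_nhds hx
    have hpd : DifferentiableAt ℝ p x := (hp.differentiableOn (by norm_num)).differentiableAt hx'
    have hFd : ∀ b, DifferentiableAt ℝ (F b) x := fun b =>
      ((hF b).differentiableOn (by norm_num)).differentiableAt hx'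
    exact hpd.add (DifferentiableAt.fun_sum fun b _ => ((hz b) x).mul (hFd b))
  constructor
  · constructor
    · intro h
      refine ⟨G, ?_, ?_, ?_⟩
      · have hzC : ∀ b : Fin N, ContDiff ℝ (⊤ : ℕ∞)
            (fun q : (Fin d → ℝ) × (Fin N → ℝ) => q.2 b) := by
          intro b
          exact (contDiff_apply ℝ ℝ b).comp contDiff_snd
        exact hp.add (ContDiffOn.sum fun b _ => ((hzC b).contDiffOn).mul (hF b))
      · intro a x hx
        exact h a x hx
      · intro x hx
        have hsum : (∑ a, x.2 a * fderiv ℝ G x ((0 : Fin d → ℝ), Pi.single a 1))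
            = ∑ a, x.2 a * F a x :=
          Finset.sum_congr rfl fun a _ => by rw [← h a x hx]
        rw [hsum, hGdef]
        ring
    · rintro ⟨L, hL, hLa, hLp⟩
      intro a x hx
      have hEq : G =ᶠ[nhds x] L := by
        filter_upwards [hW.mem_nhds hx] with q hq
        have hFq : ∀ b, F b q = fderiv ℝ L q ((0 : Fin d → ℝ), Pi.single b 1) :=
          fun b => hLa b q hq
        simp only [hGdef]
        rw [hLp q hq]
        simp only [← hFq]
        ring
      calc F a x = fderiv ℝ L x ((0 : Fin d → ℝ), Pi.single a 1) := hLa a x hx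
        _ = fderiv ℝ G x ((0 : Fin d → ℝ), Pi.single a 1) := by rw [hEq.fderiv_eq]
  · intro h L hL hLa a x hx
    have hx' : W ∈ nhds x := hW.mem_nhds hx
    have hLd : DifferentiableAt ℝ L x := (hL.differentiableOn (by norm_num)).differentiableAt hx'
    have hGd : DifferentiableAt ℝ G x := hGdiff x hx
    have hEq : (fun q => p q - (L q - ∑ b, q.2 b *
        fderiv ℝ L q ((0 : Fin d → ℝ), Pi.single b 1))) =ᶠ[nhds x] (fun q => G q - L q) := by
      filter_upwards [hx'] with q hq
      have hFq : ∀ b, fderiv ℝ L q ((0 : Fin d → ℝ), Pi.single b 1) = F b q :=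
        fun b => (hLa b q hq).symm
      simp only [hFq, hGdef]
      ring
    rw [hEq.fderiv_eq, fderiv_fun_sub hGd hLd, ContinuousLinearMap.sub_apply,
      ← h a x hx, ← hLa a x hx, sub_self]
end

section
/- Fix integers n ≥ 0, m ≥ 1, let U₀ ⊆ ℝ^{n+1} be open, let g : U₀ → ℝ be smooth and everywhere positive, and let F^μ_i, Π_i : U₀ × ℝ^m × ℝ^{m×(n+1)} → ℝ (0 ≤ μ ≤ n, 1 ≤ i ≤ m) be smooth. Call a smooth map ξ : W → ℝ^m on an open W ⊆ U₀ × ℝ^m a C-admissible vertical variation if Σ_{μ=0}^{n} Σ_{i=1}^{m} F^μ_i(x,y,z) · ( ∂_{x^μ} ξ^i(x,y) + Σ_{j=1}^{m} z^j_μ ∂_{y^j} ξ^i(x,y) ) = 0 for all (x,y) ∈ W and all z ∈ ℝ^{m×(n+1)}. Then for a smooth map s : U → ℝ^m (U ⊆ U₀ open) the following are equivalent: (1) for every open W ⊆ U₀ × ℝ^m, every C-admissible vertical variation ξ on W, and every x ∈ U with (x, s(x)) ∈ W, one has Σ_μ ∂_{x^μ} [ Σ_i ξ^i(x, s(x)) F^μ_i(x,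 s(x), Ds(x)) ] + Σ_{μ,i} ∂_{x^μ}(log g)(x) · ξ^i(x, s(x)) F^μ_i(x, s(x), Ds(x)) = Σ_i ξ^i(x, s(x)) Π_i(x, s(x), Ds(x)); (2) s is a solution of the balance system: for every i ∈ {1,…,m} and every x ∈ U, Σ_μ ∂_{x^μ} [ F^μ_i(x, s(x), Ds(x)) ] + Σ_μ ∂_{x^μ}(log g)(x) · F^μ_i(x, s(x), Ds(x)) = Π_i(x, s(x), Ds(x)). -/
/-- The first jet (matrix of first partial derivatives) of a section
`s : ℝ^{n+1} → ℝ^m` at a point `x`. -/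
noncomputable def jet1 (n m : ℕ) (s : (Fin (n + 1) → ℝ) → Fin m → ℝ)
    (x : Fin (n + 1) → ℝ) : Fin m → Fin (n + 1) → ℝ :=
  fun i ν => fderiv ℝ (fun t => s t i) x (Pi.single ν 1)

lemma aux_chain (n m : ℕ)
    (s : (Fin (n+1) → ℝ) → Fin m → ℝ)
    (x : Fin (n+1) → ℝ) (hsd : DifferentiableAt ℝ s x)
    (ξ : ((Fin (n+1) → ℝ) × (Fin m → ℝ)) → Fin m → ℝ) (i : Fin m)
    (hξi : DifferentiableAt ℝ (fun Q => ξ Q i) (x, s x)) (μ : Fin (n+1)) :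
    fderiv ℝ (fun t => ξ (t, s t) i) x (Pi.single μ 1) =
      fderiv ℝ (fun Q => ξ Q i) (x, s x) (Pi.single μ 1, 0)
        + ∑ j, jet1 n m s x j μ * fderiv ℝ (fun Q => ξ Q i) (x, s x) (0, Pi.single j 1) := by
  classical
  set L := fderiv ℝ (fun Q => ξ Q i) (x, s x) with hL
  have hγ : HasFDerivAt (fun t => (t, s t))
      ((ContinuousLinearMap.id ℝ (Fin (n+1) → ℝ)).prod (fderiv ℝ s x)) x :=
    (hasFDerivAt_id x).prodMk hsd.hasFDerivAt
  have hcomp : fderiv ℝ (fun t => ξ (t, s t) i) x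
      = L.comp ((ContinuousLinearMap.id ℝ (Fin (n+1) → ℝ)).prod (fderiv ℝ s x)) := by
    have := (hξi.hasFDerivAt.comp x hγ).fderiv
    simpa [Function.comp_def] using this
  rw [hcomp]
  have hv : fderiv ℝ s x (Pi.single μ 1) = fun j => jet1 n m s x j μ := by
    funext j
    have : fderiv ℝ (fun t => s t j) x
        = (ContinuousLinearMap.proj j : (Fin m → ℝ) →L[ℝ] ℝ).comp (fderiv ℝ s x) := by
      have := (((ContinuousLinearMap.proj j : (Fin m → ℝ) →L[ℝ] ℝ)).hasFDerivAt.comp x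
        hsd.hasFDerivAt).fderiv
      simpa [Function.comp_def] using this
    simp only [jet1, this]
    rfl
  simp only [ContinuousLinearMap.comp_apply, ContinuousLinearMap.prod_apply,
    ContinuousLinearMap.id_apply, hv]
  have hsplit : ((Pi.single μ 1 : Fin (n+1) → ℝ), (fun j => jet1 n m s x j μ))
      = ((Pi.single μ 1 : Fin (n+1) → ℝ), (0 : Fin m → ℝ))
        + ∑ j, (jet1 n m s x j μ) • ((0 : Fin (n+1) → ℝ), (Pi.single j 1 : Fin m → ℝ)) := by
    have h2 : (fun j => jet1 n m s x j μ)
        = ∑ j, (jet1 n m s x j μ) • (Pi.single j 1 : Fin m → ℝ) := by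
      have := Finset.univ_sum_single (fun j => jet1 n m s x j μ)
      rw [← this]
      congr 1
      funext j
      ext k
      simp [Pi.single_apply, mul_comm]
    apply Prod.ext
    · simp [Prod.fst_sum, Prod.smul_mk]
    · simp only [Prod.snd_add, Prod.snd_sum, Prod.smul_mk, zero_add]
      exact h2
  rw [hsplit, map_add, map_sum]
  congr 1
  refine Finset.sum_congr rfl fun j _ => ?_
  rw [map_smul]
  simp [smul_eq_mul]

lemma aux_alg {ι κ : Type*} [Fintype ι] [Fintype κ]
    (Dξ DF Fv : ι → κ → ℝ) (lam : ι → ℝ) (xi Ps : κ → ℝ)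
    (h0 : ∑ μ, ∑ j, Dξ μ j * Fv μ j = 0)
    (hb : ∀ j, ∑ μ, DF μ j + ∑ μ, lam μ * Fv μ j = Ps j) :
    ∑ μ, ∑ j, (Dξ μ j * Fv μ j + xi j * DF μ j) + ∑ μ, ∑ j, lam μ * (xi j * Fv μ j)
      = ∑ j, xi j * Ps j := by
  have e1 : ∑ μ, ∑ j, (Dξ μ j * Fv μ j + xi j * DF μ j)
      = (∑ μ, ∑ j, Dξ μ j * Fv μ j) + ∑ μ, ∑ j, xi j * DF μ j := by
    simp [Finset.sum_add_distrib]
  have e2 : ∑ μ, ∑ j, xi j * DF μ j = ∑ j, ∑ μ, xi j * DF μ j := Finset.sum_comm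
  have e3 : ∑ μ, ∑ j, lam μ * (xi j * Fv μ j) = ∑ j, ∑ μ, lam μ * (xi j * Fv μ j) :=
    Finset.sum_comm
  rw [e1, h0, zero_add, e2, e3, ← Finset.sum_add_distrib]
  refine Finset.sum_congr rfl fun j _ => ?_
  rw [← hb j, mul_add, Finset.mul_sum, Finset.mul_sum]
  congr 1
  refine Finset.sum_congr rfl fun μ _ => by ring

/-- (Poincaré–Cartan formulation of a balance system.)
With metric density `g > 0` (so `λ_G = log g`) and constitutive data
`F^μ_i, Π_i` on `U₀ × ℝ^m × ℝ^{m×(n+1)}`, a smooth section `s` on `U ⊆ U₀`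
satisfies the weighted (variational) equations (1) for every `C`-admissible
vertical variation `ξ` if and only if `s` solves the balance system (2). -/
theorem balance_system_poincare_cartan_formulation
    (n m : ℕ) (hm : 1 ≤ m)
    (U₀ : Set (Fin (n + 1) → ℝ)) (hU₀ : IsOpen U₀)
    (g : (Fin (n + 1) → ℝ) → ℝ)
    (hg : ContDiffOn ℝ (⊤ : ℕ∞) g U₀) (hgpos : ∀ x ∈ U₀, 0 < g x)
    (F : Fin (n + 1) → Fin m →
      ((Fin (n + 1) → ℝ) × (Fin m → ℝ) × (Fin m → Fin (n + 1) → ℝ)) → ℝ)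
    (Psrc : Fin m →
      ((Fin (n + 1) → ℝ) × (Fin m → ℝ) × (Fin m → Fin (n + 1) → ℝ)) → ℝ)
    (hF : ∀ μ i, ContDiffOn ℝ (⊤ : ℕ∞) (F μ i)
      (U₀ ×ˢ (Set.univ : Set ((Fin m → ℝ) × (Fin m → Fin (n + 1) → ℝ)))))
    (hPsrc : ∀ i, ContDiffOn ℝ (⊤ : ℕ∞) (Psrc i)
      (U₀ ×ˢ (Set.univ : Set ((Fin m → ℝ) × (Fin m → Fin (n + 1) → ℝ)))))
    (U : Set (Fin (n + 1) → ℝ)) (hU : IsOpen U) (hUsub : U ⊆ U₀)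
    (s : (Fin (n + 1) → ℝ) → Fin m → ℝ) (hs : ContDiffOn ℝ (⊤ : ℕ∞) s U) :
    -- (1) the variational equation holds for all C-admissible vertical variations
    (∀ Wv : Set ((Fin (n + 1) → ℝ) × (Fin m → ℝ)), IsOpen Wv →
      Wv ⊆ U₀ ×ˢ (Set.univ : Set (Fin m → ℝ)) →
      ∀ ξ : ((Fin (n + 1) → ℝ) × (Fin m → ℝ)) → Fin m → ℝ,
        ContDiffOn ℝ (⊤ : ℕ∞) ξ Wv →
        -- C-admissibility of the vertical variation ξ :
        (∀ P ∈ Wv, ∀ z : Fin m → Fin (n + 1) → ℝ,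
          ∑ μ, ∑ i, F μ i (P.1, P.2, z) *
            (fderiv ℝ (fun Q => ξ Q i) P (Pi.single μ 1, 0)
              + ∑ j, z j μ * fderiv ℝ (fun Q => ξ Q i) P (0, Pi.single j 1)) = 0) →
        ∀ x ∈ U, (x, s x) ∈ Wv →
          ∑ μ, fderiv ℝ
              (fun t => ∑ i, ξ (t, s t) i * F μ i (t, s t, jet1 n m s t)) x
              (Pi.single μ 1)
            + ∑ μ, ∑ i, fderiv ℝ (fun t => Real.log (g t)) x (Pi.single μ 1) *
                (ξ (x, s x) i * F μ i (x, s x, jet1 n m s x))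
            = ∑ i, ξ (x, s x) i * Psrc i (x, s x, jet1 n m s x))
    ↔
    -- (2) s is a solution of the balance system
    (∀ i, ∀ x ∈ U,
      ∑ μ, fderiv ℝ (fun t => F μ i (t, s t, jet1 n m s t)) x (Pi.single μ 1)
        + ∑ μ, fderiv ℝ (fun t => Real.log (g t)) x (Pi.single μ 1) *
            F μ i (x, s x, jet1 n m s x)
        = Psrc i (x, s x, jet1 n m s x)) := by
  classical
  have hO : IsOpen (U₀ ×ˢ (Set.univ : Set ((Fin m → ℝ) × (Fin m → Fin (n + 1) → ℝ)))) :=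
    hU₀.prod isOpen_univ
  have htop : ((⊤ : ℕ∞) : WithTop ℕ∞) ≠ 0 := by simp
  have hsdiff : ∀ x ∈ U, DifferentiableAt ℝ s x := fun x hx =>
    (hs.contDiffAt (hU.mem_nhds hx)).differentiableAt htop
  have hjet : ContDiffOn ℝ (⊤ : ℕ∞) (jet1 n m s) U := by
    rw [contDiffOn_pi]
    intro i
    rw [contDiffOn_pi]
    intro ν
    have h1 : ContDiffOn ℝ (⊤ : ℕ∞) (fun t => s t i) U := by
      have := ((ContinuousLinearMap.proj i : (Fin m → ℝ) →L[ℝ] ℝ)).contDiff.comp_contDiffOn hs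
      simpa [Function.comp_def] using this
    have h2 : ContDiffOn ℝ (⊤ : ℕ∞) (fun t => fderiv ℝ (fun u => s u i) t) U :=
      h1.fderiv_of_isOpen hU (by exact_mod_cast le_top)
    have := (ContinuousLinearMap.apply ℝ ℝ
      (Pi.single ν 1 : Fin (n + 1) → ℝ)).contDiff.comp_contDiffOn h2
    simpa [Function.comp_def, jet1] using this
  have hjetdiff : ∀ x ∈ U, DifferentiableAt ℝ (jet1 n m s) x := fun x hx =>
    (hjet.contDiffAt (hU.mem_nhds hx)).differentiableAt htop
  have hFdiff : ∀ μ i x, x ∈ U →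
      DifferentiableAt ℝ (fun t => F μ i (t, s t, jet1 n m s t)) x := by
    intro μ i x hx
    have hmem : ((x : Fin (n + 1) → ℝ), s x, jet1 n m s x) ∈
        U₀ ×ˢ (Set.univ : Set ((Fin m → ℝ) × (Fin m → Fin (n + 1) → ℝ))) :=
      ⟨hUsub hx, trivial⟩
    have h1 : DifferentiableAt ℝ (F μ i) (x, s x, jet1 n m s x) :=
      ((hF μ i).contDiffAt (hO.mem_nhds hmem)).differentiableAt htop
    have h2 : DifferentiableAt ℝ (fun t => ((t : Fin (n + 1) → ℝ), s t, jet1 n m s t)) x :=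
      differentiableAt_fun_id.prodMk ((hsdiff x hx).prodMk (hjetdiff x hx))
    have := h1.comp x h2
    simpa [Function.comp_def] using this
  constructor
  · -- (1) → (2)
    intro h1 i x hx
    have key : ∀ A : Fin m → ℝ, ∑ j, (Pi.single i 1 : Fin m → ℝ) j * A j = A i := by
      intro A; simp [Pi.single_apply]
    have key2 : ∀ (c : ℝ) (A : Fin m → ℝ),
        ∑ j, c * ((Pi.single i 1 : Fin m → ℝ) j * A j) = c * A i := by
      intro c A; simp [Pi.single_apply, mul_ite]
    have hadm : ∀ P ∈ U₀ ×ˢ (Set.univ : Set (Fin m → ℝ)), ∀ z : Fin m → Fin (n + 1) → ℝ,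
        ∑ μ, ∑ i', F μ i' (P.1, P.2, z) *
          (fderiv ℝ (fun Q => (fun _ : ((Fin (n + 1) → ℝ) × (Fin m → ℝ)) =>
              (Pi.single i 1 : Fin m → ℝ)) Q i') P (Pi.single μ 1, 0)
            + ∑ j, z j μ * fderiv ℝ (fun Q => (fun _ : ((Fin (n + 1) → ℝ) × (Fin m → ℝ)) =>
              (Pi.single i 1 : Fin m → ℝ)) Q i') P (0, Pi.single j 1)) = 0 := by
      intro P hP z
      simp
    have h := h1 (U₀ ×ˢ Set.univ) (hU₀.prod isOpen_univ) subset_rfl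
      (fun _ => (Pi.single i 1 : Fin m → ℝ)) contDiffOn_const hadm x hx ⟨hUsub hx, trivial⟩
    simpa only [key, key2] using h
  · -- (2) → (1)
    intro h2 Wv hWvopen hWvsub ξ hξ hadm x hx hxW
    have hξdiff : ∀ j, DifferentiableAt ℝ (fun Q => ξ Q j) (x, s x) := by
      intro j
      have hd : DifferentiableAt ℝ ξ (x, s x) :=
        (hξ.contDiffAt (hWvopen.mem_nhds hxW)).differentiableAt htop
      have := ((ContinuousLinearMap.proj j :
        (Fin m → ℝ) →L[ℝ] ℝ)).differentiableAt.comp (x, s x) hd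
      simpa [Function.comp_def] using this
    have hξs : ∀ j, DifferentiableAt ℝ (fun t => ξ (t, s t) j) x := by
      intro j
      have hγ : DifferentiableAt ℝ (fun t => ((t : Fin (n + 1) → ℝ), s t)) x :=
        differentiableAt_fun_id.prodMk (hsdiff x hx)
      have := (hξdiff j).comp x hγ
      simpa [Function.comp_def] using this
    have hprod : ∀ μ,
        fderiv ℝ (fun t => ∑ j, ξ (t, s t) j * F μ j (t, s t, jet1 n m s t)) x (Pi.single μ 1)
          = ∑ j, (fderiv ℝ (fun t => ξ (t, s t) j) x (Pi.single μ 1) *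
                F μ j (x, s x, jet1 n m s x)
              + ξ (x, s x) j *
                fderiv ℝ (fun t => F μ j (t, s t, jet1 n m s t)) x (Pi.single μ 1)) := by
      intro μ
      rw [fderiv_fun_sum (fun j _ => (hξs j).fun_mul (hFdiff μ j x hx))]
      rw [ContinuousLinearMap.sum_apply]
      refine Finset.sum_congr rfl fun j _ => ?_
      rw [fderiv_fun_mul (hξs j) (hFdiff μ j x hx)]
      simp only [ContinuousLinearMap.add_apply, ContinuousLinearMap.coe_smul',
        Pi.smul_apply, smul_eq_mul]
      ring
    have hadm' := hadm (x, s x) hxW (jet1 n m s x)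
    have hzero : ∑ μ, ∑ j, fderiv ℝ (fun t => ξ (t, s t) j) x (Pi.single μ 1) *
        F μ j (x, s x, jet1 n m s x) = 0 := by
      rw [← hadm']
      refine Finset.sum_congr rfl fun μ _ => Finset.sum_congr rfl fun j _ => ?_
      rw [aux_chain n m s x (hsdiff x hx) ξ j (hξdiff j) μ, mul_comm]
    simp only [hprod]
    exact aux_alg
      (fun μ j => fderiv ℝ (fun t => ξ (t, s t) j) x (Pi.single μ 1))
      (fun μ j => fderiv ℝ (fun t => F μ j (t, s t, jet1 n m s t)) x (Pi.single μ 1))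
      (fun μ j => F μ j (x, s x, jet1 n m s x))
      (fun μ => fderiv ℝ (fun t => Real.log (g t)) x (Pi.single μ 1))
      (fun j => ξ (x, s x) j)
      (fun j => Psrc j (x, s x, jet1 n m s x))
      hzero (fun j => h2 j x hx)
end

section
/- Fix integers n ≥ 0, m ≥ 1, let U₀ ⊆ ℝ^{n+1} be open and let F^μ_i, Π_i : U₀ × ℝ^m × ℝ^{m×(n+1)} → ℝ (0 ≤ μ ≤ n, 1 ≤ i ≤ m) be smooth. Let ξ = (ξ^1, …, ξ^m) : U₀ × ℝ^m → ℝ^m be smooth and C-admissible, i.e. Σ_{μ=0}^{n} Σ_{i=1}^{m} F^μ_i(x,y,z) · ( ∂_{x^μ} ξ^i(x,y) + Σ_{j=1}^{m} z^j_μ ∂_{y^j} ξ^i(x,y) ) = 0 for all (x,y,z) ∈ U₀ × ℝ^m × ℝ^{m×(n+1)}. Then every smooth map s : U → ℝ^m (U ⊆ U₀ open) which solves the balance system Σ_{μ} ∂_{x^μ} [ F^μ_i(x, s(x), Ds(x)) ] = Π_i(x, s(x), Ds(x)) for all i and all x ∈ U also satisfies the secondary balance law Σ_{μ} ∂_{x^μ}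 [ Σ_i ξ^i(x, s(x)) F^μ_i(x, s(x), Ds(x)) ] = Σ_i ξ^i(x, s(x)) Π_i(x, s(x), Ds(x)) on U. -/
/-- A `C`-admissible vertical vector field
`ξ` (i.e. `FDiv(ξ) = Σ F^μ_i d_μ ξ^i = 0`) generates a secondary balance law:
every solution `s` of the balance system `Σ_μ ∂_{x^μ}(F^μ_i ∘ j¹s) = Π_i ∘ j¹s`
also satisfies `Σ_μ ∂_{x^μ}( Σ_i ξ^i F^μ_i ∘ j¹s ) = Σ_i ξ^i Π_i ∘ j¹s`. -/
theorem admissible_field_gives_secondary_balance_law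
    (n m : ℕ) (hm : 1 ≤ m)
    (U₀ : Set (Fin (n + 1) → ℝ)) (hU₀ : IsOpen U₀)
    (F : Fin (n + 1) → Fin m →
      ((Fin (n + 1) → ℝ) × (Fin m → ℝ) × (Fin m → Fin (n + 1) → ℝ)) → ℝ)
    (Psrc : Fin m →
      ((Fin (n + 1) → ℝ) × (Fin m → ℝ) × (Fin m → Fin (n + 1) → ℝ)) → ℝ)
    (hF : ∀ μ i, ContDiffOn ℝ (⊤ : ℕ∞) (F μ i)
      (U₀ ×ˢ (Set.univ : Set ((Fin m → ℝ) × (Fin m → Fin (n + 1) → ℝ)))))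
    (hPsrc : ∀ i, ContDiffOn ℝ (⊤ : ℕ∞) (Psrc i)
      (U₀ ×ˢ (Set.univ : Set ((Fin m → ℝ) × (Fin m → Fin (n + 1) → ℝ)))))
    (ξ : ((Fin (n + 1) → ℝ) × (Fin m → ℝ)) → Fin m → ℝ)
    (hξ : ContDiffOn ℝ (⊤ : ℕ∞) ξ (U₀ ×ˢ (Set.univ : Set (Fin m → ℝ))))
    -- C-admissibility: FDiv(ξ) = Σ_{μ,i} F^μ_i · d_μ ξ^i = 0
    (hadm : ∀ x ∈ U₀, ∀ (y : Fin m → ℝ) (z : Fin m → Fin (n + 1) → ℝ),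
      ∑ μ, ∑ i, F μ i (x, y, z) *
        (fderiv ℝ (fun Q => ξ Q i) (x, y) (Pi.single μ 1, 0)
          + ∑ j, z j μ * fderiv ℝ (fun Q => ξ Q i) (x, y) (0, Pi.single j 1)) = 0)
    (U : Set (Fin (n + 1) → ℝ)) (hU : IsOpen U) (hUsub : U ⊆ U₀)
    (s : (Fin (n + 1) → ℝ) → Fin m → ℝ) (hs : ContDiffOn ℝ (⊤ : ℕ∞) s U)
    -- s solves the balance system
    (hsol : ∀ i, ∀ x ∈ U,
      ∑ μ, fderiv ℝ (fun t => F μ i (t, s t, jet1 n m s t)) x (Pi.single μ 1)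
        = Psrc i (x, s x, jet1 n m s x)) :
    -- secondary balance law
    ∀ x ∈ U,
      ∑ μ, fderiv ℝ
          (fun t => ∑ i, ξ (t, s t) i * F μ i (t, s t, jet1 n m s t)) x
          (Pi.single μ 1)
        = ∑ i, ξ (x, s x) i * Psrc i (x, s x, jet1 n m s x) := by
  intro x hx
  classical
  have hxU₀ : x ∈ U₀ := hUsub hx
  -- differentiability of s
  have hsdiff : ∀ t ∈ U, DifferentiableAt ℝ s t := fun t ht =>
    (hs.differentiableOn (by simp)).differentiableAt (hU.mem_nhds ht)
  have hsx : DifferentiableAt ℝ s x := hsdiff x hx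
  -- jet1 equals evaluation of fderiv s on U
  have hjet_eq : ∀ t ∈ U, jet1 n m s t
      = fun i ν => fderiv ℝ s t (Pi.single ν 1) i := by
    intro t ht
    funext i ν
    have h1 : HasFDerivAt (fun u => s u i)
        ((ContinuousLinearMap.proj i).comp (fderiv ℝ s t)) t :=
      ((ContinuousLinearMap.proj i : (Fin m → ℝ) →L[ℝ] ℝ).hasFDerivAt).comp t
        (hsdiff t ht).hasFDerivAt
    simp [jet1, h1.fderiv]
  -- fderiv s is smooth on U
  have hD : ContDiffOn ℝ (⊤ : ℕ∞) (fderiv ℝ s) U := hs.fderiv_of_isOpen hU (by exact_mod_cast le_top)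
  have hD' : DifferentiableAt ℝ (fderiv ℝ s) x :=
    (hD.differentiableOn (by simp)).differentiableAt (hU.mem_nhds hx)
  have hjdiff : DifferentiableAt ℝ (jet1 n m s) x := by
    have h2 : DifferentiableAt ℝ
        (fun t => (fun i ν => fderiv ℝ s t (Pi.single ν 1) i :
          Fin m → Fin (n + 1) → ℝ)) x := by
      rw [differentiableAt_pi]
      intro i
      rw [differentiableAt_pi]
      intro ν
      exact ((ContinuousLinearMap.proj i).differentiableAt.comp x
        (((ContinuousLinearMap.apply ℝ (Fin m → ℝ)
          (Pi.single ν (1:ℝ))).differentiableAt).comp x hD'))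
    have heq : jet1 n m s =ᶠ[nhds x]
        (fun t => (fun i ν => fderiv ℝ s t (Pi.single ν 1) i)) :=
      Filter.eventuallyEq_of_mem (hU.mem_nhds hx) hjet_eq
    exact h2.congr_of_eventuallyEq heq
  -- composites
  have hGx : DifferentiableAt ℝ (fun t => ((t, s t, jet1 n m s t) :
      (Fin (n+1) → ℝ) × (Fin m → ℝ) × (Fin m → Fin (n+1) → ℝ))) x :=
    differentiableAt_fun_id.prodMk (hsx.prodMk hjdiff)
  have hopenprod : IsOpen (U₀ ×ˢ (Set.univ :
      Set ((Fin m → ℝ) × (Fin m → Fin (n + 1) → ℝ)))) := hU₀.prod isOpen_univ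
  have hmemprod : ((x, s x, jet1 n m s x) :
      (Fin (n+1) → ℝ) × (Fin m → ℝ) × (Fin m → Fin (n+1) → ℝ)) ∈
      U₀ ×ˢ (Set.univ : Set ((Fin m → ℝ) × (Fin m → Fin (n + 1) → ℝ))) :=
    ⟨hxU₀, trivial⟩
  have hFcomp : ∀ μ i, DifferentiableAt ℝ
      (fun t => F μ i (t, s t, jet1 n m s t)) x := fun μ i =>
    ((((hF μ i).differentiableOn (by simp)).differentiableAt
      (hopenprod.mem_nhds hmemprod)).comp x hGx)
  have hξopen : IsOpen (U₀ ×ˢ (Set.univ : Set (Fin m → ℝ))) :=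
    hU₀.prod isOpen_univ
  have hξx : DifferentiableAt ℝ ξ (x, s x) :=
    (hξ.differentiableOn (by simp)).differentiableAt
      (hξopen.mem_nhds ⟨hxU₀, trivial⟩)
  have hξix : ∀ i, DifferentiableAt ℝ (fun Q => ξ Q i) (x, s x) := fun i =>
    differentiableAt_pi.mp hξx i
  have hξcomp : ∀ i, DifferentiableAt ℝ (fun t => ξ (t, s t) i) x := fun i =>
    (hξix i).comp (g := fun Q => ξ Q i) x (differentiableAt_fun_id.prodMk hsx)
  -- chain rule for ξ
  have hchain : ∀ i μ, fderiv ℝ (fun t => ξ (t, s t) i) x (Pi.single μ 1)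
      = fderiv ℝ (fun Q => ξ Q i) (x, s x)
          (Pi.single μ 1, fderiv ℝ s x (Pi.single μ 1)) := by
    intro i μ
    have hφ' : HasFDerivAt (fun t => ((t, s t) : (Fin (n+1) → ℝ) × (Fin m → ℝ)))
        ((ContinuousLinearMap.id ℝ _).prod (fderiv ℝ s x)) x :=
      HasFDerivAt.prodMk (hasFDerivAt_id x) hsx.hasFDerivAt
    have hcomp : HasFDerivAt (fun t => ξ (t, s t) i)
        ((fderiv ℝ (fun Q => ξ Q i) (x, s x)).comp
          ((ContinuousLinearMap.id ℝ _).prod (fderiv ℝ s x))) x :=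
      (hξix i).hasFDerivAt.comp (g := fun Q => ξ Q i) x hφ'
    rw [hcomp.fderiv]
    rfl
  -- decomposition along the basis
  have hdecomp : ∀ i μ, fderiv ℝ (fun Q => ξ Q i) (x, s x)
        (Pi.single μ 1, fderiv ℝ s x (Pi.single μ 1))
      = fderiv ℝ (fun Q => ξ Q i) (x, s x) (Pi.single μ 1, 0)
        + ∑ j, jet1 n m s x j μ *
            fderiv ℝ (fun Q => ξ Q i) (x, s x) (0, Pi.single j 1) := by
    intro i μ
    have hz : ∀ j, jet1 n m s x j μ = fderiv ℝ s x (Pi.single μ 1) j := by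
      intro j; rw [hjet_eq x hx]
    have hv : ((Pi.single μ 1, fderiv ℝ s x (Pi.single μ 1)) :
          (Fin (n+1) → ℝ) × (Fin m → ℝ))
        = (Pi.single μ 1, 0) + ∑ j, (fderiv ℝ s x (Pi.single μ 1) j) •
            ((0, Pi.single j 1) : (Fin (n+1) → ℝ) × (Fin m → ℝ)) := by
      refine Prod.ext ?_ ?_ <;> simp [Prod.fst_sum, Prod.snd_sum]
      funext k
      simp [Finset.sum_apply, Pi.single_apply]
    rw [hv, map_add, map_sum]
    simp only [map_smul, smul_eq_mul]
    congr 1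
    exact Finset.sum_congr rfl fun j _ => by rw [hz j]
  -- product rule
  have hterm : ∀ μ i, fderiv ℝ
        (fun t => ξ (t, s t) i * F μ i (t, s t, jet1 n m s t)) x (Pi.single μ 1)
      = F μ i (x, s x, jet1 n m s x) *
          fderiv ℝ (fun t => ξ (t, s t) i) x (Pi.single μ 1)
        + ξ (x, s x) i *
          fderiv ℝ (fun t => F μ i (t, s t, jet1 n m s t)) x (Pi.single μ 1) := by
    intro μ i
    rw [fderiv_fun_mul (hξcomp i) (hFcomp μ i)]
    simp [smul_eq_mul]
    ring
  have hsum : ∀ μ, fderiv ℝ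
        (fun t => ∑ i, ξ (t, s t) i * F μ i (t, s t, jet1 n m s t)) x
        (Pi.single μ 1)
      = ∑ i, fderiv ℝ
          (fun t => ξ (t, s t) i * F μ i (t, s t, jet1 n m s t)) x
          (Pi.single μ 1) := by
    intro μ
    rw [fderiv_fun_sum (A := fun i t => ξ (t, s t) i * F μ i (t, s t, jet1 n m s t)) (fun i _ => (hξcomp i).mul (hFcomp μ i))]
    simp
  calc ∑ μ, fderiv ℝ
        (fun t => ∑ i, ξ (t, s t) i * F μ i (t, s t, jet1 n m s t)) x
        (Pi.single μ 1)
      = ∑ μ, ∑ i, (F μ i (x, s x, jet1 n m s x) *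
            (fderiv ℝ (fun Q => ξ Q i) (x, s x) (Pi.single μ 1, 0)
              + ∑ j, jet1 n m s x j μ *
                  fderiv ℝ (fun Q => ξ Q i) (x, s x) (0, Pi.single j 1))
          + ξ (x, s x) i *
            fderiv ℝ (fun t => F μ i (t, s t, jet1 n m s t)) x (Pi.single μ 1)) := by
        refine Finset.sum_congr rfl fun μ _ => ?_
        rw [hsum μ]
        refine Finset.sum_congr rfl fun i _ => ?_
        rw [hterm μ i, hchain i μ, hdecomp i μ]
    _ = (∑ μ, ∑ i, F μ i (x, s x, jet1 n m s x) *
            (fderiv ℝ (fun Q => ξ Q i) (x, s x) (Pi.single μ 1, 0)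
              + ∑ j, jet1 n m s x j μ *
                  fderiv ℝ (fun Q => ξ Q i) (x, s x) (0, Pi.single j 1)))
        + ∑ i, ξ (x, s x) i * ∑ μ,
            fderiv ℝ (fun t => F μ i (t, s t, jet1 n m s t)) x (Pi.single μ 1) := by
        rw [Finset.sum_congr rfl fun μ _ => Finset.sum_add_distrib,
          Finset.sum_add_distrib]
        congr 1
        rw [Finset.sum_comm]
        exact Finset.sum_congr rfl fun i _ => (Finset.mul_sum _ _ _).symm
    _ = ∑ i, ξ (x, s x) i * Psrc i (x, s x, jet1 n m s x) := by
        rw [hadm x hxU₀ (s x) (jet1 n m s x), zero_add]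
        exact Finset.sum_congr rfl fun i _ => by rw [hsol i x hx]
end

section
/- Fix integers n ≥ 0, m ≥ 1 and let U₀ ⊆ ℝ^{n+1} be open. On the jet space U₀ × ℝ^m × ℝ^{m×(n+1)} define the Cartan distribution Ca at a point P = (x, y, z) as the linear span of the n+1 vectors D_μ(z) = ( e_μ, (z^i_μ)_{i}, 0 ) (0 ≤ μ ≤ n, where e_μ is the μ-th standard basis vector of ℝ^{n+1}) together with all the coordinate vectors ∂_{z^i_μ}. Let a : U₀ → ℝ^{n+1} and b : U₀ × ℝ^m → ℝ^m be smooth, let ξ(x,y) = (a(x), b(x,y)), and let ξ¹ be the vector field on U₀ × ℝ^m × ℝ^{m×(n+1)} with components ( a(x), b(x,y), c(x,y,z) ), c^i_μ = ∂_{x^μ} b^i + Σ_j z^j_μ ∂_{y^j} b^i − Σ_ν z^i_ν ∂_{x^μ} a^ν. Then: (a) for every smooth vector field W on (an open subset of) U₀ × ℝ^m × ℝ^{m×(n+1)} with W(P) ∈ Ca(P) at every point P, the Lie bracket satisfies [ξ¹, W](P) ∈ Ca(P) at every point P (infinitesimal invariance of the Cartan distribution); (b) ξ¹ is the unique smooth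 vector field on U₀ × ℝ^m × ℝ^{m×(n+1)} whose first two blocks of components equal (a(x), b(x,y)) (i.e. which is projectable onto ξ) and which has property (a). -/
/-- Lie bracket of two vector fields on (an open subset of) a real normed
vector space: `[V, W](P) = DW(P)·V(P) − DV(P)·W(P)`. -/
noncomputable def VBr {E : Type*} [NormedAddCommGroup E] [NormedSpace ℝ E]
    (V W : E → E) : E → E :=
  fun P => fderiv ℝ W P (V P) - fderiv ℝ V P (W P)

/-- The 1-jet prolongation `ξ¹` of the projectable vector field
`ξ(x,y) = (a(x), b(x,y))` on `ℝ^{n+1} × ℝ^m`. -/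
noncomputable def prol (n m : ℕ)
    (a : (Fin (n + 1) → ℝ) → Fin (n + 1) → ℝ)
    (b : (Fin (n + 1) → ℝ) × (Fin m → ℝ) → Fin m → ℝ) :
    ((Fin (n + 1) → ℝ) × (Fin m → ℝ) × (Fin m → Fin (n + 1) → ℝ)) →
      ((Fin (n + 1) → ℝ) × (Fin m → ℝ) × (Fin m → Fin (n + 1) → ℝ)) :=
  fun P =>
    (a P.1, b (P.1, P.2.1),
      fun i μ =>
        fderiv ℝ (fun q => b q i) (P.1, P.2.1) (Pi.single μ 1, 0)
          + ∑ j, P.2.2 j μ * fderiv ℝ (fun q => b q i) (P.1, P.2.1) (0, Pi.single j 1)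
          - ∑ ν, P.2.2 i ν * fderiv ℝ (fun t => a t ν) P.1 (Pi.single μ 1))

/-- The Cartan distribution on the jet space `ℝ^{n+1} × ℝ^m × ℝ^{m×(n+1)}` at
a point `P = (x, y, z)`: the span of the total-derivative vectors
`D_μ(z) = (e_μ, (z^i_μ)_i, 0)` and the vertical vectors `∂_{z^i_μ}`. -/
noncomputable def CaDist (n m : ℕ)
    (P : (Fin (n + 1) → ℝ) × (Fin m → ℝ) × (Fin m → Fin (n + 1) → ℝ)) :
    Submodule ℝ ((Fin (n + 1) → ℝ) × (Fin m → ℝ) × (Fin m → Fin (n + 1) → ℝ)) :=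
  Submodule.span ℝ
    ((Set.range fun μ : Fin (n + 1) =>
        ((Pi.single μ 1 : Fin (n + 1) → ℝ),
          (fun i => P.2.2 i μ : Fin m → ℝ),
          (0 : Fin m → Fin (n + 1) → ℝ)))
      ∪ (Set.range fun pr : Fin m × Fin (n + 1) =>
        ((0 : Fin (n + 1) → ℝ), (0 : Fin m → ℝ),
          (Pi.single pr.1 (Pi.single pr.2 1) : Fin m → Fin (n + 1) → ℝ))))

abbrev JX (n : ℕ) := Fin (n+1) → ℝ
abbrev JY (m : ℕ) := Fin m → ℝ
abbrev JZ (n m : ℕ) := Fin m → Fin (n+1) → ℝ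
abbrev Jet (n m : ℕ) := JX n × JY m × JZ n m

noncomputable def jπ1 (n m : ℕ) (μ : Fin (n+1)) : Jet n m →L[ℝ] ℝ :=
  (ContinuousLinearMap.proj μ).comp (ContinuousLinearMap.fst ℝ (JX n) (JY m × JZ n m))
noncomputable def jπ2 (n m : ℕ) (i : Fin m) : Jet n m →L[ℝ] ℝ :=
  (ContinuousLinearMap.proj i).comp ((ContinuousLinearMap.fst ℝ (JY m) (JZ n m)).comp
    (ContinuousLinearMap.snd ℝ (JX n) (JY m × JZ n m)))
noncomputable def jπ3 (n m : ℕ) (i : Fin m) (μ : Fin (n+1)) : Jet n m →L[ℝ] ℝ :=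
  (ContinuousLinearMap.proj μ).comp ((ContinuousLinearMap.proj i).comp
    ((ContinuousLinearMap.snd ℝ (JY m) (JZ n m)).comp
      (ContinuousLinearMap.snd ℝ (JX n) (JY m × JZ n m))))
noncomputable def jπxy (n m : ℕ) : Jet n m →L[ℝ] (JX n × JY m) :=
  (ContinuousLinearMap.fst ℝ (JX n) (JY m × JZ n m)).prod
    ((ContinuousLinearMap.fst ℝ (JY m) (JZ n m)).comp
      (ContinuousLinearMap.snd ℝ (JX n) (JY m × JZ n m)))

example (n m : ℕ) (μ) (v : Jet n m) : jπ1 n m μ v = v.1 μ := rfl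
example (n m : ℕ) (i) (v : Jet n m) : jπ2 n m i v = v.2.1 i := rfl
example (n m : ℕ) (i μ) (v : Jet n m) : jπ3 n m i μ v = v.2.2 i μ := rfl
example (n m : ℕ) (v : Jet n m) : jπxy n m v = (v.1, v.2.1) := rfl

-- scalar CLM expansion on pi domain
theorem clm_expand {k : ℕ} (L : (Fin k → ℝ) →L[ℝ] ℝ) (u : Fin k → ℝ) :
    L u = ∑ μ, u μ * L (Pi.single μ 1) := by
  have h : u = ∑ μ, u μ • (Pi.single μ 1 : Fin k → ℝ) := by
    funext ν
    simp [Finset.sum_apply, Pi.single_apply, mul_ite, Finset.sum_ite_eq]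
  conv_lhs => rw [h]
  simp [map_sum, smul_eq_mul]

theorem fderiv_coord {α : Type*} [NormedAddCommGroup α] [NormedSpace ℝ α] {k : ℕ}
    {F : α → (Fin k → ℝ)} {p : α} (hF : DifferentiableAt ℝ F p) (i : Fin k) :
    fderiv ℝ (fun q => F q i) p = (ContinuousLinearMap.proj i).comp (fderiv ℝ F p) := by
  have h := (ContinuousLinearMap.proj i : (Fin k → ℝ) →L[ℝ] ℝ).hasFDerivAt.comp p
    hF.hasFDerivAt
  have h' : HasFDerivAt (fun q => F q i)
      ((ContinuousLinearMap.proj i).comp (fderiv ℝ F p)) p := h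
  exact h'.fderiv

theorem clm_expand2 {k l : ℕ} (L : ((Fin k → ℝ) × (Fin l → ℝ)) →L[ℝ] ℝ)
    (u : Fin k → ℝ) (w : Fin l → ℝ) :
    L (u, w) = ∑ μ, u μ * L (Pi.single μ 1, 0) + ∑ j, w j * L (0, Pi.single j 1) := by
  have h : (u, w) = ((u, 0) : (Fin k → ℝ) × (Fin l → ℝ)) + (0, w) := by simp
  rw [h, map_add]
  congr 1
  · have := clm_expand (L.comp (ContinuousLinearMap.inl ℝ (Fin k → ℝ) (Fin l → ℝ))) u
    simpa using this
  · have := clm_expand (L.comp (ContinuousLinearMap.inr ℝ (Fin k → ℝ) (Fin l → ℝ))) w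
    simpa using this

theorem mem_CaDist_iff {n m : ℕ} (P v : Jet n m) :
    v ∈ CaDist n m P ↔ ∀ i, v.2.1 i = ∑ μ, P.2.2 i μ * v.1 μ := by
  constructor
  · intro hv i
    have hker : CaDist n m P ≤ LinearMap.ker
        ({ toFun := fun w : Jet n m => w.2.1 i - ∑ μ, P.2.2 i μ * w.1 μ,
           map_add' := by
             intro w₁ w₂
             simp only [Prod.fst_add, Prod.snd_add, Pi.add_apply, mul_add,
               Finset.sum_add_distrib]
             ring
           map_smul' := by
             intro c w
             simp only [Prod.smul_fst, Prod.smul_snd, Pi.smul_apply, smul_eq_mul,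
               RingHom.id_apply]
             rw [mul_sub, Finset.mul_sum]
             congr 1
             exact Finset.sum_congr rfl fun μ _ => by ring } : Jet n m →ₗ[ℝ] ℝ) := by
      rw [CaDist, Submodule.span_le]
      rintro w (⟨μ, rfl⟩ | ⟨pr, rfl⟩) <;>
        simp [LinearMap.mem_ker, Pi.single_apply, mul_ite, Finset.sum_ite_eq]
    have h0 := hker hv
    rw [LinearMap.mem_ker] at h0
    have : v.2.1 i - ∑ μ, P.2.2 i μ * v.1 μ = 0 := h0
    linarith [this]
  · intro h
    have hv : v = (∑ μ, v.1 μ • (((Pi.single μ 1 : Fin (n+1) → ℝ),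
        (fun i => P.2.2 i μ : Fin m → ℝ), (0 : Fin m → Fin (n+1) → ℝ)) : Jet n m))
      + ∑ pr : Fin m × Fin (n+1), v.2.2 pr.1 pr.2 •
        (((0 : Fin (n+1) → ℝ), (0 : Fin m → ℝ),
          (Pi.single pr.1 (Pi.single pr.2 1) : Fin m → Fin (n+1) → ℝ)) : Jet n m) := by
      refine Prod.ext ?_ (Prod.ext ?_ ?_)
      · simp only [Prod.fst_add, Prod.fst_sum, Prod.smul_fst]
        funext ν
        simp [Finset.sum_apply, Pi.single_apply, mul_ite, Finset.sum_ite_eq]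
      · simp only [Prod.snd_add, Prod.snd_sum, Prod.smul_snd, Prod.fst_add,
          Prod.fst_sum, Prod.smul_fst]
        funext j
        simp only [Finset.sum_apply, Pi.smul_apply, smul_eq_mul, Pi.add_apply,
          Pi.zero_apply, Finset.sum_const_zero, add_zero, mul_zero]
        rw [h j]
        exact Finset.sum_congr rfl fun μ _ => by ring
      · simp only [Prod.snd_add, Prod.snd_sum, Prod.smul_snd]
        funext j ν
        simp [Finset.sum_apply, Pi.single_apply, Fintype.sum_prod_type, ite_apply,
          mul_ite, Finset.sum_ite_eq, Finset.sum_ite_eq']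
    rw [hv]
    exact Submodule.add_mem _
      (Submodule.sum_mem _ fun μ _ => Submodule.smul_mem _ _
        (Submodule.subset_span (Or.inl ⟨μ, rfl⟩)))
      (Submodule.sum_mem _ fun pr _ => Submodule.smul_mem _ _
        (Submodule.subset_span (Or.inr ⟨pr, rfl⟩)))

theorem constraint_deriv {n m : ℕ} {Ω : Set (Jet n m)} (hΩ : IsOpen Ω)
    {W : Jet n m → Jet n m} {P : Jet n m} (hP : P ∈ Ω)
    (hWd : DifferentiableAt ℝ W P)
    (hWCa : ∀ Q ∈ Ω, (W Q).2.1 = fun i => ∑ μ, Q.2.2 i μ * (W Q).1 μ)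
    (i : Fin m) (h : Jet n m) :
    (fderiv ℝ W P h).2.1 i
      = ∑ μ, (h.2.2 i μ * (W P).1 μ + P.2.2 i μ * (fderiv ℝ W P h).1 μ) := by
  have hW' := hWd.hasFDerivAt
  have h1 : HasFDerivAt (fun Q => (W Q).2.1 i)
      ((jπ2 n m i).comp (fderiv ℝ W P)) P := (jπ2 n m i).hasFDerivAt.comp P hW'
  have h2 : HasFDerivAt (fun Q : Jet n m => ∑ μ, Q.2.2 i μ * (W Q).1 μ)
      (∑ μ, (P.2.2 i μ • ((jπ1 n m μ).comp (fderiv ℝ W P))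
        + (W P).1 μ • (jπ3 n m i μ))) P := by
    refine HasFDerivAt.fun_sum fun μ _ => ?_
    have ha : HasFDerivAt (fun Q : Jet n m => Q.2.2 i μ) (jπ3 n m i μ) P :=
      (jπ3 n m i μ).hasFDerivAt
    have hb : HasFDerivAt (fun Q : Jet n m => (W Q).1 μ)
        ((jπ1 n m μ).comp (fderiv ℝ W P)) P := (jπ1 n m μ).hasFDerivAt.comp P hW'
    exact ha.mul hb
  have htot := h1.sub h2
  have hzero : HasFDerivAt
      (fun Q : Jet n m => (W Q).2.1 i - ∑ μ, Q.2.2 i μ * (W Q).1 μ)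
      (0 : Jet n m →L[ℝ] ℝ) P := by
    refine (hasFDerivAt_const (0:ℝ) P).congr_of_eventuallyEq ?_
    filter_upwards [hΩ.mem_nhds hP] with Q hQ
    have := congrFun (hWCa Q hQ) i
    simp [this]
  have hL := htot.unique hzero
  have := congrArg (fun L : Jet n m →L[ℝ] ℝ => L h) hL
  simp only [ContinuousLinearMap.coe_sub', Pi.sub_apply, ContinuousLinearMap.coe_comp',
    Function.comp_apply, ContinuousLinearMap.coe_sum', Finset.sum_apply,
    ContinuousLinearMap.add_apply, ContinuousLinearMap.coe_smul', Pi.smul_apply,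
    smul_eq_mul, ContinuousLinearMap.zero_apply] at this
  have h3 : (fderiv ℝ W P h).2.1 i
      = ∑ μ, (P.2.2 i μ * (fderiv ℝ W P h).1 μ + (W P).1 μ * h.2.2 i μ) := by
    have := sub_eq_zero.mp this
    exact this
  rw [h3]
  exact Finset.sum_congr rfl fun μ _ => by ring

theorem prol_hasFDerivAt {n m : ℕ} {U₀ : Set (JX n)} (hU₀ : IsOpen U₀)
    {a : JX n → JX n} {b : JX n × JY m → JY m}
    (ha : ContDiffOn ℝ (⊤ : ℕ∞) a U₀)
    (hb : ContDiffOn ℝ (⊤ : ℕ∞) b (U₀ ×ˢ (Set.univ : Set (JY m))))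
    {P : Jet n m} (hPU : P.1 ∈ U₀) :
    ∃ LC : Jet n m →L[ℝ] JZ n m,
      HasFDerivAt (prol n m a b)
        (((fderiv ℝ a P.1).comp
            (ContinuousLinearMap.fst ℝ (JX n) (JY m × JZ n m))).prod
          (((fderiv ℝ b (P.1, P.2.1)).comp (jπxy n m)).prod LC)) P := by
  have hS : IsOpen (U₀ ×ˢ (Set.univ : Set (JY m))) := hU₀.prod isOpen_univ
  have hPS : (P.1, P.2.1) ∈ U₀ ×ˢ (Set.univ : Set (JY m)) := ⟨hPU, trivial⟩
  have had : DifferentiableAt ℝ a P.1 :=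
    (ha.differentiableOn (by simp)).differentiableAt (hU₀.mem_nhds hPU)
  have hbd : DifferentiableAt ℝ b (P.1, P.2.1) :=
    (hb.differentiableOn (by simp)).differentiableAt (hS.mem_nhds hPS)
  -- first block
  have hA : HasFDerivAt (fun Q : Jet n m => a Q.1)
      ((fderiv ℝ a P.1).comp (ContinuousLinearMap.fst ℝ (JX n) (JY m × JZ n m))) P :=
    had.hasFDerivAt.comp P (ContinuousLinearMap.fst ℝ (JX n) (JY m × JZ n m)).hasFDerivAt
  -- second block
  have hB : HasFDerivAt (fun Q : Jet n m => b (Q.1, Q.2.1))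
      ((fderiv ℝ b (P.1, P.2.1)).comp (jπxy n m)) P :=
    hbd.hasFDerivAt.comp P (jπxy n m).hasFDerivAt
  -- third block differentiable
  have hsopen : IsOpen {Q : Jet n m | Q.1 ∈ U₀} := hU₀.preimage continuous_fst
  have hPs : P ∈ {Q : Jet n m | Q.1 ∈ U₀} := hPU
  have hmaps : Set.MapsTo (fun Q : Jet n m => (Q.1, Q.2.1)) {Q : Jet n m | Q.1 ∈ U₀}
      (U₀ ×ˢ (Set.univ : Set (JY m))) := fun Q hQ => ⟨hQ, trivial⟩
  have hbT : ∀ (i : Fin m) (w : JX n × JY m), DifferentiableAt ℝ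
      (fun Q : Jet n m => fderiv ℝ (fun q => b q i) (Q.1, Q.2.1) w) P := by
    intro i w
    have hbi : ContDiffOn ℝ (⊤ : ℕ∞) (fun q => b q i)
        (U₀ ×ˢ (Set.univ : Set (JY m))) := contDiffOn_pi.mp hb i
    have hfdi : ContDiffOn ℝ (⊤ : ℕ∞) (fderiv ℝ (fun q => b q i))
        (U₀ ×ˢ (Set.univ : Set (JY m))) := hbi.fderiv_of_isOpen hS (by exact_mod_cast le_top)
    have happ : ContDiffOn ℝ (⊤ : ℕ∞)
        (fun q => fderiv ℝ (fun q' => b q' i) q w)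
        (U₀ ×ˢ (Set.univ : Set (JY m))) := hfdi.clm_apply contDiffOn_const
    have hcomp : ContDiffOn ℝ (⊤ : ℕ∞)
        (fun Q : Jet n m => fderiv ℝ (fun q => b q i) (Q.1, Q.2.1) w)
        {Q : Jet n m | Q.1 ∈ U₀} :=
      happ.comp ((jπxy n m).contDiff.contDiffOn) hmaps
    exact (hcomp.differentiableOn (by simp)).differentiableAt (hsopen.mem_nhds hPs)
  have haT : ∀ (ν : Fin (n+1)) (w : JX n), DifferentiableAt ℝ
      (fun Q : Jet n m => fderiv ℝ (fun t => a t ν) Q.1 w) P := by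
    intro ν w
    have hai : ContDiffOn ℝ (⊤ : ℕ∞) (fun t => a t ν) U₀ := contDiffOn_pi.mp ha ν
    have hfdi : ContDiffOn ℝ (⊤ : ℕ∞) (fderiv ℝ (fun t => a t ν)) U₀ :=
      hai.fderiv_of_isOpen hU₀ (by exact_mod_cast le_top)
    have happ : ContDiffOn ℝ (⊤ : ℕ∞)
        (fun t => fderiv ℝ (fun t' => a t' ν) t w) U₀ := hfdi.clm_apply contDiffOn_const
    have hcomp : ContDiffOn ℝ (⊤ : ℕ∞)
        (fun Q : Jet n m => fderiv ℝ (fun t => a t ν) Q.1 w)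
        {Q : Jet n m | Q.1 ∈ U₀} :=
      happ.comp ((ContinuousLinearMap.fst ℝ (JX n) (JY m × JZ n m)).contDiff.contDiffOn)
        (fun Q hQ => hQ)
    exact (hcomp.differentiableOn (by simp)).differentiableAt (hsopen.mem_nhds hPs)
  have hC : DifferentiableAt ℝ (fun Q : Jet n m => (fun i μ =>
      fderiv ℝ (fun q => b q i) (Q.1, Q.2.1) (Pi.single μ 1, 0)
        + ∑ j, Q.2.2 j μ * fderiv ℝ (fun q => b q i) (Q.1, Q.2.1) (0, Pi.single j 1)
        - ∑ ν, Q.2.2 i ν * fderiv ℝ (fun t => a t ν) Q.1 (Pi.single μ 1) : JZ n m)) P := by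
    rw [differentiableAt_pi]
    intro i
    rw [differentiableAt_pi]
    intro μ
    refine DifferentiableAt.sub (DifferentiableAt.add (hbT i _) ?_) ?_
    · refine DifferentiableAt.fun_sum fun j _ => DifferentiableAt.mul ?_ (hbT i _)
      exact (jπ3 n m j μ).differentiableAt
    · refine DifferentiableAt.fun_sum fun ν _ => DifferentiableAt.mul ?_ (haT ν _)
      exact (jπ3 n m i ν).differentiableAt
  exact ⟨_, hA.prodMk (hB.prodMk hC.hasFDerivAt)⟩

theorem algebra_key {n m : ℕ} (i : Fin m) (z : Fin m → Fin (n+1) → ℝ)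
    (u D B : Fin (n+1) → ℝ) (Cf : Fin m → ℝ) (A : Fin (n+1) → Fin (n+1) → ℝ) :
    (∑ μ, ((B μ + ∑ j, z j μ * Cf j - ∑ ν, z i ν * A ν μ) * u μ + z i μ * D μ))
      - (∑ μ, u μ * B μ + ∑ j, (∑ μ, z j μ * u μ) * Cf j)
      = ∑ μ, z i μ * (D μ - ∑ ρ, u ρ * A μ ρ) := by
  have h1 : ∑ μ, ((B μ + ∑ j, z j μ * Cf j - ∑ ν, z i ν * A ν μ) * u μ + z i μ * D μ)
      = ((∑ μ, u μ * B μ) + (∑ μ, ∑ j, z j μ * u μ * Cf j)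
          - ∑ μ, ∑ ν, z i ν * (u μ * A ν μ)) + ∑ μ, z i μ * D μ := by
    rw [Finset.sum_add_distrib]
    congr 1
    have hterm : ∀ μ, (B μ + ∑ j, z j μ * Cf j - ∑ ν, z i ν * A ν μ) * u μ
        = u μ * B μ + (∑ j, z j μ * u μ * Cf j) - ∑ ν, z i ν * (u μ * A ν μ) := by
      intro μ
      rw [sub_mul, add_mul, Finset.sum_mul, Finset.sum_mul]
      congr 1
      · congr 1
        · ring
        · exact Finset.sum_congr rfl fun j _ => by ring
      · exact Finset.sum_congr rfl fun ν _ => by ring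
    rw [Finset.sum_congr rfl fun μ _ => hterm μ, Finset.sum_sub_distrib,
      Finset.sum_add_distrib]
  have h2 : ∑ j, (∑ μ, z j μ * u μ) * Cf j = ∑ μ, ∑ j, z j μ * u μ * Cf j := by
    rw [Finset.sum_comm]
    exact Finset.sum_congr rfl fun j _ => by rw [Finset.sum_mul]
  have h3 : ∑ μ, ∑ ν, z i ν * (u μ * A ν μ) = ∑ μ, ∑ ρ, z i μ * (u ρ * A μ ρ) := by
    rw [Finset.sum_comm]
  have h4 : ∑ μ, z i μ * (D μ - ∑ ρ, u ρ * A μ ρ)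
      = ∑ μ, z i μ * D μ - ∑ μ, ∑ ρ, z i μ * (u ρ * A μ ρ) := by
    rw [← Finset.sum_sub_distrib]
    exact Finset.sum_congr rfl fun μ _ => by rw [mul_sub, Finset.mul_sum]
  rw [h1, h2, h3, h4]
  ring

theorem partA {n m : ℕ} {U₀ : Set (JX n)} (hU₀ : IsOpen U₀)
    {a : JX n → JX n} {b : JX n × JY m → JY m}
    (ha : ContDiffOn ℝ (⊤ : ℕ∞) a U₀)
    (hb : ContDiffOn ℝ (⊤ : ℕ∞) b (U₀ ×ˢ (Set.univ : Set (JY m))))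
    (Ω : Set (Jet n m)) (hΩ : IsOpen Ω)
    (W : Jet n m → Jet n m) (hW : ContDiffOn ℝ (⊤ : ℕ∞) W Ω)
    (hWCa : ∀ P ∈ Ω, W P ∈ CaDist n m P) :
    ∀ P ∈ Ω, P.1 ∈ U₀ → VBr (prol n m a b) W P ∈ CaDist n m P := by
  intro P hP hPU
  have hWd : DifferentiableAt ℝ W P :=
    (hW.differentiableOn (by simp)).differentiableAt (hΩ.mem_nhds hP)
  have hWCa' : ∀ Q ∈ Ω, (W Q).2.1 = fun i => ∑ μ, Q.2.2 i μ * (W Q).1 μ :=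
    fun Q hQ => funext fun i => (mem_CaDist_iff Q (W Q)).1 (hWCa Q hQ) i
  obtain ⟨LC, hprol⟩ := prol_hasFDerivAt hU₀ ha hb hPU
  have hpd := hprol.fderiv
  have had : DifferentiableAt ℝ a P.1 :=
    (ha.differentiableOn (by simp)).differentiableAt (hU₀.mem_nhds hPU)
  have hbd : DifferentiableAt ℝ b (P.1, P.2.1) :=
    ((hb.differentiableOn (by simp)).differentiableAt
      ((hU₀.prod isOpen_univ).mem_nhds ⟨hPU, trivial⟩))
  rw [mem_CaDist_iff]
  intro i
  have key := constraint_deriv hΩ hP hWd hWCa' i (prol n m a b P)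
  set v := W P with hv
  set DWh := fderiv ℝ W P (prol n m a b P) with hDWh
  have hblock1 : (fderiv ℝ (prol n m a b) P v).1 = fderiv ℝ a P.1 v.1 := by
    rw [hpd]; rfl
  have hblock2 : (fderiv ℝ (prol n m a b) P v).2.1
      = fderiv ℝ b (P.1, P.2.1) (v.1, v.2.1) := by
    rw [hpd]; rfl
  show (DWh - fderiv ℝ (prol n m a b) P v).2.1 i
      = ∑ μ, P.2.2 i μ * (DWh - fderiv ℝ (prol n m a b) P v).1 μ
  simp only [Prod.snd_sub, Prod.fst_sub, Pi.sub_apply, hblock1, hblock2]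
  -- key identity for DWh
  rw [key]
  -- expand b and a derivatives in coordinates
  have hbco : fderiv ℝ b (P.1, P.2.1) (v.1, v.2.1) i
      = fderiv ℝ (fun q => b q i) (P.1, P.2.1) (v.1, v.2.1) := by
    rw [fderiv_coord hbd i]; rfl
  have haco : ∀ μ u, fderiv ℝ a P.1 u μ = fderiv ℝ (fun t => a t μ) P.1 u := by
    intro μ u; rw [fderiv_coord had μ]; rfl
  have hcon : ∀ j, v.2.1 j = ∑ μ, P.2.2 j μ * v.1 μ :=
    fun j => (mem_CaDist_iff P v).1 (hWCa P hP) j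
  have hthird : ∀ μ, (prol n m a b P).2.2 i μ
      = fderiv ℝ (fun q => b q i) (P.1, P.2.1) (Pi.single μ 1, 0)
        + ∑ j, P.2.2 j μ * fderiv ℝ (fun q => b q i) (P.1, P.2.1) (0, Pi.single j 1)
        - ∑ ν, P.2.2 i ν * fderiv ℝ (fun t => a t ν) P.1 (Pi.single μ 1) :=
    fun μ => rfl
  rw [hbco, clm_expand2]
  have hgoal2 : ∀ μ, P.2.2 i μ * (DWh.1 μ - fderiv ℝ a P.1 v.1 μ)
      = P.2.2 i μ * (DWh.1 μ - ∑ ρ, v.1 ρ * fderiv ℝ (fun t => a t μ) P.1 (Pi.single ρ 1)) := by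
    intro μ
    rw [haco, clm_expand]
  rw [Finset.sum_congr rfl fun μ _ => hgoal2 μ]
  rw [Finset.sum_congr rfl (fun μ _ => by rw [hthird μ] :
    ∀ μ ∈ Finset.univ, (prol n m a b P).2.2 i μ * v.1 μ + P.2.2 i μ * DWh.1 μ
      = (fderiv ℝ (fun q => b q i) (P.1, P.2.1) (Pi.single μ 1, 0)
          + ∑ j, P.2.2 j μ * fderiv ℝ (fun q => b q i) (P.1, P.2.1) (0, Pi.single j 1)
          - ∑ ν, P.2.2 i ν * fderiv ℝ (fun t => a t ν) P.1 (Pi.single μ 1)) * v.1 μ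
        + P.2.2 i μ * DWh.1 μ)]
  rw [Finset.sum_congr rfl (fun j _ => by rw [hcon j] :
    ∀ j ∈ Finset.univ, v.2.1 j * fderiv ℝ (fun q => b q i) (P.1, P.2.1) (0, Pi.single j 1)
      = (∑ μ, P.2.2 j μ * v.1 μ)
          * fderiv ℝ (fun q => b q i) (P.1, P.2.1) (0, Pi.single j 1))]
  exact algebra_key i P.2.2 v.1 DWh.1 _ _ _

theorem partB {n m : ℕ} {U₀ : Set (JX n)} (hU₀ : IsOpen U₀)
    {a : JX n → JX n} {b : JX n × JY m → JY m}
    (ha : ContDiffOn ℝ (⊤ : ℕ∞) a U₀)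
    (hb : ContDiffOn ℝ (⊤ : ℕ∞) b (U₀ ×ˢ (Set.univ : Set (JY m))))
    (V : Jet n m → Jet n m)
    (hV : ContDiffOn ℝ (⊤ : ℕ∞) V (U₀ ×ˢ (Set.univ : Set (JY m × JZ n m))))
    (hproj : ∀ P : Jet n m, P.1 ∈ U₀ → (V P).1 = a P.1 ∧ (V P).2.1 = b (P.1, P.2.1))
    (hinv : ∀ Ω : Set (Jet n m), IsOpen Ω →
      ∀ W : Jet n m → Jet n m, ContDiffOn ℝ (⊤ : ℕ∞) W Ω →
        (∀ P ∈ Ω, W P ∈ CaDist n m P) →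
        ∀ P ∈ Ω, P.1 ∈ U₀ → VBr V W P ∈ CaDist n m P) :
    ∀ P : Jet n m, P.1 ∈ U₀ → V P = prol n m a b P := by
  intro P hPU
  have hS : IsOpen (U₀ ×ˢ (Set.univ : Set (JY m × JZ n m))) := hU₀.prod isOpen_univ
  have hPS : P ∈ U₀ ×ˢ (Set.univ : Set (JY m × JZ n m)) := ⟨hPU, trivial⟩
  have hVd : DifferentiableAt ℝ V P :=
    (hV.differentiableOn (by simp)).differentiableAt (hS.mem_nhds hPS)
  have had : DifferentiableAt ℝ a P.1 :=
    (ha.differentiableOn (by simp)).differentiableAt (hU₀.mem_nhds hPU)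
  have hbd : DifferentiableAt ℝ b (P.1, P.2.1) :=
    ((hb.differentiableOn (by simp)).differentiableAt
      ((hU₀.prod isOpen_univ).mem_nhds ⟨hPU, trivial⟩))
  -- fderiv of the first two blocks of V
  have hfst : (fun Q : Jet n m => (V Q).1) =ᶠ[nhds P] fun Q => a Q.1 := by
    filter_upwards [hS.mem_nhds hPS] with Q hQ
    exact (hproj Q hQ.1).1
  have hsnd : (fun Q : Jet n m => (V Q).2.1) =ᶠ[nhds P] fun Q => b (Q.1, Q.2.1) := by
    filter_upwards [hS.mem_nhds hPS] with Q hQ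
    exact (hproj Q hQ.1).2
  have hV1 : ∀ h : Jet n m, (fderiv ℝ V P h).1 = fderiv ℝ a P.1 h.1 := by
    intro h
    have e1 : HasFDerivAt (fun Q : Jet n m => (V Q).1)
        ((ContinuousLinearMap.fst ℝ (JX n) (JY m × JZ n m)).comp (fderiv ℝ V P)) P :=
      (ContinuousLinearMap.fst ℝ (JX n) (JY m × JZ n m)).hasFDerivAt.comp P
        hVd.hasFDerivAt
    have e2 : HasFDerivAt (fun Q : Jet n m => a Q.1)
        ((fderiv ℝ a P.1).comp (ContinuousLinearMap.fst ℝ (JX n) (JY m × JZ n m))) P :=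
      had.hasFDerivAt.comp P (ContinuousLinearMap.fst ℝ (JX n) (JY m × JZ n m)).hasFDerivAt
    have := (e2.congr_of_eventuallyEq hfst).unique e1
    have := congrArg (fun L : Jet n m →L[ℝ] JX n => L h) this.symm
    exact this
  have hV2 : ∀ h : Jet n m, (fderiv ℝ V P h).2.1
      = fderiv ℝ b (P.1, P.2.1) (h.1, h.2.1) := by
    intro h
    have e1 : HasFDerivAt (fun Q : Jet n m => (V Q).2.1)
        (((ContinuousLinearMap.fst ℝ (JY m) (JZ n m)).comp
          (ContinuousLinearMap.snd ℝ (JX n) (JY m × JZ n m))).comp (fderiv ℝ V P)) P :=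
      ((ContinuousLinearMap.fst ℝ (JY m) (JZ n m)).comp
        (ContinuousLinearMap.snd ℝ (JX n) (JY m × JZ n m))).hasFDerivAt.comp P
        hVd.hasFDerivAt
    have e2 : HasFDerivAt (fun Q : Jet n m => b (Q.1, Q.2.1))
        ((fderiv ℝ b (P.1, P.2.1)).comp (jπxy n m)) P :=
      hbd.hasFDerivAt.comp P (jπxy n m).hasFDerivAt
    have := (e2.congr_of_eventuallyEq hsnd).unique e1
    have := congrArg (fun L : Jet n m →L[ℝ] JY m => L h) this.symm
    exact this
  -- the total-derivative test fields
  have hmain : ∀ (μ : Fin (n+1)) (i : Fin m),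
      (V P).2.2 i μ = (prol n m a b P).2.2 i μ := by
    intro μ i
    set Wμ : Jet n m → Jet n m := fun Q =>
      ((Pi.single μ 1 : JX n), (fun i => Q.2.2 i μ : JY m), (0 : JZ n m)) with hWμdef
    set Lμ : Jet n m →L[ℝ] Jet n m :=
      (0 : Jet n m →L[ℝ] JX n).prod
        ((ContinuousLinearMap.pi fun i => jπ3 n m i μ).prod
          (0 : Jet n m →L[ℝ] JZ n m)) with hLμdef
    have hWeq : Wμ = fun Q : Jet n m =>
        (((Pi.single μ 1 : JX n), (0 : JY m), (0 : JZ n m)) : Jet n m) + Lμ Q := by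
      funext Q
      refine Prod.ext ?_ (Prod.ext ?_ ?_)
      · simp [hWμdef, hLμdef]
      · show (fun i => Q.2.2 i μ) = (0 : JY m) + fun i => (jπ3 n m i μ) Q
        funext j
        show Q.2.2 j μ = 0 + Q.2.2 j μ
        rw [zero_add]
      · simp [hWμdef, hLμdef]
    have hWfd : ∀ Q : Jet n m, HasFDerivAt Wμ Lμ Q := by
      intro Q
      rw [hWeq]
      exact Lμ.hasFDerivAt.const_add _
    have hWsm : ContDiffOn ℝ (⊤ : ℕ∞) Wμ (Set.univ : Set (Jet n m)) := by
      rw [hWeq]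
      exact (contDiff_const.add Lμ.contDiff).contDiffOn
    have hWca : ∀ Q ∈ (Set.univ : Set (Jet n m)), Wμ Q ∈ CaDist n m Q := by
      intro Q _
      rw [mem_CaDist_iff]
      intro j
      simp [hWμdef, Pi.single_apply, mul_ite, Finset.sum_ite_eq]
    have hmem := hinv Set.univ isOpen_univ Wμ hWsm hWca P trivial hPU
    rw [mem_CaDist_iff] at hmem
    have heq := hmem i
    -- compute the bracket components
    have hfWμ : fderiv ℝ Wμ P = Lμ := (hWfd P).fderiv
    have hb1 : (VBr V Wμ P).1 = fun ν => - fderiv ℝ a P.1 (Pi.single μ 1) ν := by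
      funext ν
      simp only [VBr, Prod.fst_sub, Pi.sub_apply, hfWμ]
      rw [hV1 (Wμ P)]
      have h0 : (Lμ (V P)).1 = 0 := rfl
      rw [h0]
      simp
      rfl
    have hb2 : (VBr V Wμ P).2.1 i = (V P).2.2 i μ
        - fderiv ℝ b (P.1, P.2.1) (Pi.single μ 1, fun j => P.2.2 j μ) i := by
      simp only [VBr, Prod.snd_sub, Prod.fst_sub, Pi.sub_apply, hfWμ]
      rw [hV2 (Wμ P)]
      rfl
    have hsum : ∑ ν, P.2.2 i ν * (VBr V Wμ P).1 ν
        = - ∑ ν, P.2.2 i ν * fderiv ℝ a P.1 (Pi.single μ 1) ν := by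
      rw [← Finset.sum_neg_distrib]
      refine Finset.sum_congr rfl fun ν _ => ?_
      rw [congrFun hb1 ν]; ring
    rw [hb2, hsum] at heq
    have hbco : fderiv ℝ b (P.1, P.2.1) (Pi.single μ 1, fun j => P.2.2 j μ) i
        = fderiv ℝ (fun q => b q i) (P.1, P.2.1) (Pi.single μ 1, fun j => P.2.2 j μ) := by
      rw [fderiv_coord hbd i]; rfl
    have haexp : ∑ ν, P.2.2 i ν * fderiv ℝ a P.1 (Pi.single μ 1) ν
        = ∑ ν, P.2.2 i ν * fderiv ℝ (fun t => a t ν) P.1 (Pi.single μ 1) := by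
      refine Finset.sum_congr rfl fun ν _ => ?_
      conv_rhs => rw [fderiv_coord had ν]
      rfl
    have hsingle : ∑ ρ, (Pi.single μ 1 : JX n) ρ
        * fderiv ℝ (fun q => b q i) (P.1, P.2.1) (Pi.single ρ 1, 0)
        = fderiv ℝ (fun q => b q i) (P.1, P.2.1) (Pi.single μ 1, 0) := by
      simp [Pi.single_apply, ite_mul, Finset.sum_ite_eq]
    have hfin : (V P).2.2 i μ
        = fderiv ℝ b (P.1, P.2.1) (Pi.single μ 1, fun j => P.2.2 j μ) i
          - ∑ ν, P.2.2 i ν * fderiv ℝ a P.1 (Pi.single μ 1) ν := by linarith [heq]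
    rw [hfin, hbco, clm_expand2, hsingle, haexp]
    rfl
  refine Prod.ext ?_ (Prod.ext ?_ ?_)
  · exact (hproj P hPU).1
  · exact (hproj P hPU).2
  · funext i μ
    exact hmain μ i

/-- (a) The prolongation `ξ¹` of a projectable vector field
`ξ = (a, b)` infinitesimally preserves the Cartan distribution: its bracket
with any smooth vector field lying in the Cartan distribution again lies in
the Cartan distribution. (b) `ξ¹` is the unique smooth vector field
projecting onto `ξ` with property (a). -/
theorem prolongation_preserves_cartan_distribution_and_unique
    (n m : ℕ) (hm : 1 ≤ m)
    (U₀ : Set (Fin (n + 1) → ℝ)) (hU₀ : IsOpen U₀)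
    (a : (Fin (n + 1) → ℝ) → Fin (n + 1) → ℝ)
    (b : (Fin (n + 1) → ℝ) × (Fin m → ℝ) → Fin m → ℝ)
    (ha : ContDiffOn ℝ (⊤ : ℕ∞) a U₀)
    (hb : ContDiffOn ℝ (⊤ : ℕ∞) b (U₀ ×ˢ (Set.univ : Set (Fin m → ℝ)))) :
    -- (a) infinitesimal invariance of the Cartan distribution
    (∀ Ω : Set ((Fin (n + 1) → ℝ) × (Fin m → ℝ) × (Fin m → Fin (n + 1) → ℝ)),
      IsOpen Ω →
      ∀ W : ((Fin (n + 1) → ℝ) × (Fin m → ℝ) × (Fin m → Fin (n + 1) → ℝ)) →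
          ((Fin (n + 1) → ℝ) × (Fin m → ℝ) × (Fin m → Fin (n + 1) → ℝ)),
        ContDiffOn ℝ (⊤ : ℕ∞) W Ω →
        (∀ P ∈ Ω, W P ∈ CaDist n m P) →
        ∀ P ∈ Ω, P.1 ∈ U₀ → VBr (prol n m a b) W P ∈ CaDist n m P)
    ∧
    -- (b) uniqueness among smooth vector fields projectable onto ξ = (a, b)
    (∀ V : ((Fin (n + 1) → ℝ) × (Fin m → ℝ) × (Fin m → Fin (n + 1) → ℝ)) →
        ((Fin (n + 1) → ℝ) × (Fin m → ℝ) × (Fin m → Fin (n + 1) → ℝ)),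
      ContDiffOn ℝ (⊤ : ℕ∞) V
        (U₀ ×ˢ (Set.univ : Set ((Fin m → ℝ) × (Fin m → Fin (n + 1) → ℝ)))) →
      (∀ P : (Fin (n + 1) → ℝ) × (Fin m → ℝ) × (Fin m → Fin (n + 1) → ℝ),
        P.1 ∈ U₀ → (V P).1 = a P.1 ∧ (V P).2.1 = b (P.1, P.2.1)) →
      (∀ Ω : Set ((Fin (n + 1) → ℝ) × (Fin m → ℝ) × (Fin m → Fin (n + 1) → ℝ)),
        IsOpen Ω →
        ∀ W : ((Fin (n + 1) → ℝ) × (Fin m → ℝ) × (Fin m → Fin (n + 1) → ℝ)) →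
            ((Fin (n + 1) → ℝ) × (Fin m → ℝ) × (Fin m → Fin (n + 1) → ℝ)),
          ContDiffOn ℝ (⊤ : ℕ∞) W Ω →
          (∀ P ∈ Ω, W P ∈ CaDist n m P) →
          ∀ P ∈ Ω, P.1 ∈ U₀ → VBr V W P ∈ CaDist n m P) →
      ∀ P : (Fin (n + 1) → ℝ) × (Fin m → ℝ) × (Fin m → Fin (n + 1) → ℝ),
        P.1 ∈ U₀ → V P = prol n m a b P) := by
  constructor
  · intro Ω hΩ W hW hWCa P hP hPU
    exact partA hU₀ ha hb Ω hΩ W hW hWCa P hP hPU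
  · intro V hV hproj hinv P hPU
    exact partB hU₀ ha hb V hV hproj hinv P hPU
end

section
/- Fix integers n ≥ 0, m ≥ 1, let Λ ⊆ ℝ^m be open, and let h^μ, F^μ_i, Π_i : Λ → ℝ (0 ≤ μ ≤ n, 1 ≤ i ≤ m) be C¹ functions satisfying the Lagrange–Liu compatibility condition ∂h^μ/∂λ^j (λ) = Σ_{i=1}^{m} λ^i · ∂F^μ_i/∂λ^j (λ) for all μ ∈ {0,…,n}, all j ∈ {1,…,m} and all λ ∈ Λ. Then for every open U ⊆ ℝ^{n+1} and every C¹ map λ : U → Λ that solves the balance system Σ_{μ=0}^{n} ∂/∂x^μ [ F^μ_i(λ(x)) ] = Π_i(λ(x)) for all i ∈ {1,…,m} and all x ∈ U, the entropy balance law holds: Σ_{μ=0}^{n} ∂/∂x^μ [ h^μ(λ(x)) ] = Σ_{i=1}^{m} λ^i(x) · Π_i(λ(x)) for all x ∈ U. -/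
/-- (Entropy principle of RET in Lagrange–Liu variables.)
If the entropy densities/fluxes `h^μ` and the fluxes `F^μ_i` on the open set
`Λ ⊆ ℝ^m` satisfy the compatibility condition
`∂h^μ/∂λ^j = Σ_i λ^i ∂F^μ_i/∂λ^j`, then every `C¹` solution `λ(x)` of the
balance system `Σ_μ ∂_{x^μ}(F^μ_i ∘ λ) = Π_i ∘ λ` also satisfies the entropy
balance law `Σ_μ ∂_{x^μ}(h^μ ∘ λ) = Σ_i λ^i · (Π_i ∘ λ)`. -/
theorem entropy_principle_in_dual_variables
    (n m : ℕ) (hm : 1 ≤ m)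
    (Λ : Set (Fin m → ℝ)) (hΛ : IsOpen Λ)
    (h : Fin (n + 1) → (Fin m → ℝ) → ℝ)
    (F : Fin (n + 1) → Fin m → (Fin m → ℝ) → ℝ)
    (Psrc : Fin m → (Fin m → ℝ) → ℝ)
    (hh : ∀ μ, ContDiffOn ℝ 1 (h μ) Λ)
    (hF : ∀ μ i, ContDiffOn ℝ 1 (F μ i) Λ)
    (hPsrc : ∀ i, ContDiffOn ℝ 1 (Psrc i) Λ)
    -- Lagrange–Liu compatibility:  ∂h^μ/∂λ^j = Σ_i λ^i ∂F^μ_i/∂λ^j on Λ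
    (hcompat : ∀ (μ : Fin (n + 1)) (j : Fin m), ∀ l ∈ Λ,
      fderiv ℝ (h μ) l (Pi.single j 1)
        = ∑ i, l i * fderiv ℝ (F μ i) l (Pi.single j 1)) :
    ∀ U : Set (Fin (n + 1) → ℝ), IsOpen U →
      ∀ lam : (Fin (n + 1) → ℝ) → Fin m → ℝ,
        ContDiffOn ℝ 1 lam U → (∀ x ∈ U, lam x ∈ Λ) →
        -- lam solves the balance system
        (∀ (i : Fin m), ∀ x ∈ U,
          ∑ μ, fderiv ℝ (fun t => F μ i (lam t)) x (Pi.single μ 1)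
            = Psrc i (lam x)) →
        -- entropy balance law
        ∀ x ∈ U,
          ∑ μ, fderiv ℝ (fun t => h μ (lam t)) x (Pi.single μ 1)
            = ∑ i, lam x i * Psrc i (lam x) := by
  intro U hU lam hlam hmap hbal x hx
  have hlx : lam x ∈ Λ := hmap x hx
  have hdlam : DifferentiableAt ℝ lam x :=
    (hlam.contDiffAt (hU.mem_nhds hx)).differentiableAt one_ne_zero
  have hdh : ∀ μ, DifferentiableAt ℝ (h μ) (lam x) := fun μ =>
    ((hh μ).contDiffAt (hΛ.mem_nhds hlx)).differentiableAt one_ne_zero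
  have hdF : ∀ μ i, DifferentiableAt ℝ (F μ i) (lam x) := fun μ i =>
    ((hF μ i).contDiffAt (hΛ.mem_nhds hlx)).differentiableAt one_ne_zero
  -- evaluate any linear functional via the basis Pi.single j 1
  have key : ∀ (L : (Fin m → ℝ) →L[ℝ] ℝ) (w : Fin m → ℝ),
      L w = ∑ j, w j * L (Pi.single j 1) := by
    intro L w
    have hw : w = ∑ j, w j • (Pi.single j 1 : Fin m → ℝ) := by
      funext k
      simp [Finset.sum_apply, Pi.single_apply]
    conv_lhs => rw [hw]
    rw [map_sum]
    simp [smul_eq_mul]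
  set w : Fin (n + 1) → Fin m → ℝ := fun μ => fderiv ℝ lam x (Pi.single μ 1) with hwdef
  have chainh : ∀ μ, fderiv ℝ (fun t => h μ (lam t)) x (Pi.single μ 1)
      = fderiv ℝ (h μ) (lam x) (w μ) := by
    intro μ
    have := fderiv_comp x (hdh μ) hdlam
    calc fderiv ℝ (fun t => h μ (lam t)) x (Pi.single μ 1)
        = fderiv ℝ (h μ ∘ lam) x (Pi.single μ 1) := rfl
      _ = fderiv ℝ (h μ) (lam x) (w μ) := by rw [this]; rfl
  have chainF : ∀ μ i, fderiv ℝ (fun t => F μ i (lam t)) x (Pi.single μ 1)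
      = fderiv ℝ (F μ i) (lam x) (w μ) := by
    intro μ i
    have := fderiv_comp x (hdF μ i) hdlam
    calc fderiv ℝ (fun t => F μ i (lam t)) x (Pi.single μ 1)
        = fderiv ℝ (F μ i ∘ lam) x (Pi.single μ 1) := rfl
      _ = fderiv ℝ (F μ i) (lam x) (w μ) := by rw [this]; rfl
  calc ∑ μ, fderiv ℝ (fun t => h μ (lam t)) x (Pi.single μ 1)
      = ∑ μ, ∑ i, lam x i * fderiv ℝ (fun t => F μ i (lam t)) x (Pi.single μ 1) := by
        refine Finset.sum_congr rfl fun μ _ => ?_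
        rw [chainh μ, key]
        calc ∑ j, w μ j * fderiv ℝ (h μ) (lam x) (Pi.single j 1)
            = ∑ j, w μ j * ∑ i, lam x i * fderiv ℝ (F μ i) (lam x) (Pi.single j 1) := by
              refine Finset.sum_congr rfl fun j _ => ?_
              rw [hcompat μ j (lam x) hlx]
          _ = ∑ i, lam x i * ∑ j, w μ j * fderiv ℝ (F μ i) (lam x) (Pi.single j 1) := by
              simp only [Finset.mul_sum]
              rw [Finset.sum_comm]
              exact Finset.sum_congr rfl fun i _ => Finset.sum_congr rfl fun j _ => by ring
          _ = ∑ i, lam x i * fderiv ℝ (F μ i) (lam x) (w μ) := by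
              refine Finset.sum_congr rfl fun i _ => ?_
              rw [key (fderiv ℝ (F μ i) (lam x)) (w μ)]
          _ = ∑ i, lam x i * fderiv ℝ (fun t => F μ i (lam t)) x (Pi.single μ 1) := by
              simp [chainF]
    _ = ∑ i, lam x i * ∑ μ, fderiv ℝ (fun t => F μ i (lam t)) x (Pi.single μ 1) := by
        rw [Finset.sum_comm]
        simp [Finset.mul_sum]
    _ = ∑ i, lam x i * Psrc i (lam x) := by
        refine Finset.sum_congr rfl fun i _ => ?_
        rw [hbal i x hx]
end

section
/- Fix integers n ≥ 0, m ≥ 1, and let L : ℝ^m × ℝ^{m×(n+1)} → ℝ and Π_1, …, Π_m : ℝ^m × ℝ^{m×(n+1)} → ℝ be smooth functions (depending on the fields y and the jet variables z, but not on the space-time point x). Let U ⊆ ℝ^{n+1} be open and let s : U → ℝ^m be a smooth solution of the semi-Lagrangian balance system Σ_{ν=0}^{n} ∂/∂x^ν [ (∂L/∂z^i_ν)( s(x), Ds(x) ) ] = Π_i( s(x), Ds(x) ) for all i ∈ {1,…,m} and x ∈ U. Then for every μ ∈ {0,…,n} the energy–momentum balance law holds on U: Σ_{ν=0}^{n} ∂/∂x^ν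 [ Σ_{i=1}^{m} (∂L/∂z^i_ν)( s(x), Ds(x) ) · ∂_{x^μ} s^i(x) − δ^ν_μ · L( s(x), Ds(x) ) ] = Σ_{i=1}^{m} ( Π_i( s(x), Ds(x) ) − (∂L/∂y^i)( s(x), Ds(x) ) ) · ∂_{x^μ} s^i(x). -/
/-- (Energy–momentum balance law for a homogeneous
semi-Lagrangian constitutive relation.) If `s` solves the semi-Lagrangian
balance system `Σ_ν ∂_{x^ν}[ (∂L/∂z^i_ν) ∘ j¹s ] = Π_i ∘ j¹s`, then for each
`μ` the divergence of the energy–momentum tensor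
`T^ν_μ = Σ_i (∂L/∂z^i_ν) ∂_{x^μ} s^i − δ^ν_μ L` along `j¹s` equals
`Σ_i (Π_i − ∂L/∂y^i) ∂_{x^μ} s^i`. -/
theorem energy_momentum_balance_law
    (n m : ℕ) (hm : 1 ≤ m)
    (L : ((Fin m → ℝ) × (Fin m → Fin (n + 1) → ℝ)) → ℝ)
    (Psrc : Fin m → ((Fin m → ℝ) × (Fin m → Fin (n + 1) → ℝ)) → ℝ)
    (hL : ContDiff ℝ (⊤ : ℕ∞) L)
    (hPsrc : ∀ i, ContDiff ℝ (⊤ : ℕ∞) (Psrc i))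
    (U : Set (Fin (n + 1) → ℝ)) (hU : IsOpen U)
    (s : (Fin (n + 1) → ℝ) → Fin m → ℝ) (hs : ContDiffOn ℝ (⊤ : ℕ∞) s U)
    -- s solves the semi-Lagrangian balance system
    (hsol : ∀ (i : Fin m), ∀ x ∈ U,
      ∑ ν, fderiv ℝ
          (fun t => fderiv ℝ L (s t, jet1 n m s t)
            (0, Pi.single i (Pi.single ν 1))) x (Pi.single ν 1)
        = Psrc i (s x, jet1 n m s x)) :
    -- energy–momentum balance law
    ∀ (μ : Fin (n + 1)), ∀ x ∈ U,
      ∑ ν, fderiv ℝ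
          (fun t =>
            (∑ i, fderiv ℝ L (s t, jet1 n m s t)
                (0, Pi.single i (Pi.single ν 1)) * jet1 n m s t i μ)
              - (if ν = μ then L (s t, jet1 n m s t) else 0)) x (Pi.single ν 1)
        = ∑ i, (Psrc i (s x, jet1 n m s x)
              - fderiv ℝ L (s x, jet1 n m s x) (Pi.single i 1, 0))
            * jet1 n m s x i μ := by
  intro μ x hx
  classical
  have hUx : U ∈ nhds x := hU.mem_nhds hx
  have htop : ((⊤ : ℕ∞) : WithTop ℕ∞) + 1 ≤ ((⊤ : ℕ∞) : WithTop ℕ∞) := by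
    simp
  have hone : ((⊤ : ℕ∞) : WithTop ℕ∞) ≠ 0 := by
    simp
  -- smoothness of s near each point of U
  have hsd : ∀ t ∈ U, ContDiffAt ℝ (⊤ : ℕ∞) s t := fun t ht =>
    hs.contDiffAt (hU.mem_nhds ht)
  set Ds : (Fin (n + 1) → ℝ) → ((Fin (n + 1) → ℝ) →L[ℝ] (Fin m → ℝ)) :=
    fun t => fderiv ℝ s t with hDs_def
  set J : (Fin (n + 1) → ℝ) → Fin m → Fin (n + 1) → ℝ :=
    fun t i ν => Ds t (Pi.single ν 1) i with hJ_def
  -- jet1 agrees with J on U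
  have hjetJ : ∀ t ∈ U, jet1 n m s t = J t := by
    intro t ht
    funext i ν
    have hdiff : DifferentiableAt ℝ s t := (hsd t ht).differentiableAt hone
    have hcomp : HasFDerivAt (fun u => s u i)
        ((ContinuousLinearMap.proj i).comp (fderiv ℝ s t)) t :=
      ((ContinuousLinearMap.proj (R := ℝ) (φ := fun _ : Fin m => ℝ) i).hasFDerivAt).comp t
        hdiff.hasFDerivAt
    simp only [jet1, hcomp.fderiv, ContinuousLinearMap.coe_comp', Function.comp_apply,
      ContinuousLinearMap.proj_apply, hJ_def, hDs_def]
  have hev : ∀ᶠ t in nhds x, jet1 n m s t = J t := by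
    filter_upwards [hUx] with t ht using hjetJ t ht
  -- smoothness of Ds and J
  have hDsC : ∀ t ∈ U, ContDiffAt ℝ (⊤ : ℕ∞) Ds t := fun t ht =>
    (hsd t ht).fderiv_right htop
  have hJcompC : ∀ (i : Fin m) (ν : Fin (n + 1)),
      ContDiffAt ℝ (⊤ : ℕ∞) (fun t => J t i ν) x := by
    intro i ν
    have h1 : ContDiffAt ℝ (⊤ : ℕ∞) (fun t => Ds t (Pi.single ν 1)) x :=
      (hDsC x hx).clm_apply contDiffAt_const
    exact (ContinuousLinearMap.proj (R := ℝ) (φ := fun _ : Fin m => ℝ) i).contDiff.contDiffAt.comp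
      x h1
  have hJC : ContDiffAt ℝ (⊤ : ℕ∞) J x :=
    contDiffAt_pi.2 fun i => contDiffAt_pi.2 fun ν => hJcompC i ν
  set G : (Fin (n + 1) → ℝ) → ((Fin m → ℝ) × (Fin m → Fin (n + 1) → ℝ)) :=
    fun t => (s t, J t) with hG_def
  have hGC : ContDiffAt ℝ (⊤ : ℕ∞) G x := (hsd x hx).prodMk hJC
  have hGd : DifferentiableAt ℝ G x := hGC.differentiableAt hone
  -- second derivative of s and symmetry
  have hDsdiff : DifferentiableAt ℝ Ds x := (hDsC x hx).differentiableAt hone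
  set s2 : (Fin (n + 1) → ℝ) →L[ℝ] (Fin (n + 1) → ℝ) →L[ℝ] (Fin m → ℝ) :=
    fderiv ℝ Ds x with hs2_def
  have hs2 : HasFDerivAt Ds s2 x := hDsdiff.hasFDerivAt
  have hsymm : ∀ v w, s2 v w = s2 w v := by
    intro v w
    refine second_derivative_symmetric_of_eventually (f := s) ?_ hs2 v w
    filter_upwards [hUx] with t ht using ((hsd t ht).differentiableAt hone).hasFDerivAt
  -- derivative of components of J
  have hJd : ∀ (i : Fin m) (ν : Fin (n + 1)) (v : Fin (n + 1) → ℝ),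
      fderiv ℝ (fun t => J t i ν) x v = s2 v (Pi.single ν 1) i := by
    intro i ν v
    have hφ0 := (((ContinuousLinearMap.proj (R := ℝ) (φ := fun _ : Fin m => ℝ) i).comp
        ((ContinuousLinearMap.apply ℝ (Fin m → ℝ)) (Pi.single ν 1))).hasFDerivAt).comp x hs2
    have hφ : HasFDerivAt (fun t => J t i ν)
        (((ContinuousLinearMap.proj (R := ℝ) (φ := fun _ : Fin m => ℝ) i).comp
          ((ContinuousLinearMap.apply ℝ (Fin m → ℝ)) (Pi.single ν 1))).comp s2) x := hφ0
    rw [hφ.fderiv]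
    rfl
  -- the fluxes
  set F : Fin m → Fin (n + 1) → (Fin (n + 1) → ℝ) → ℝ :=
    fun i ν t => fderiv ℝ L (G t) (0, Pi.single i (Pi.single ν 1)) with hF_def
  have hDL : ContDiff ℝ (⊤ : ℕ∞) (fderiv ℝ L) := hL.fderiv_right htop
  have hFC : ∀ i ν, ContDiffAt ℝ (⊤ : ℕ∞) (F i ν) x := by
    intro i ν
    exact (hDL.contDiffAt.comp x hGC).clm_apply contDiffAt_const
  have hFd : ∀ i ν, DifferentiableAt ℝ (F i ν) x := fun i ν =>
    (hFC i ν).differentiableAt hone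
  have hJcompd : ∀ i ν, DifferentiableAt ℝ (fun t => J t i ν) x := fun i ν =>
    (hJcompC i ν).differentiableAt hone
  have hLGd : DifferentiableAt ℝ (fun t => L (G t)) x :=
    (hL.contDiffAt.comp x hGC).differentiableAt hone

  -- transfer the balance system to F
  have hsol' : ∀ i, ∑ ν, fderiv ℝ (F i ν) x (Pi.single ν 1) = Psrc i (G x) := by
    intro i
    have h0 := hsol i x hx
    rw [hjetJ x hx] at h0
    rw [← h0]
    refine Finset.sum_congr rfl fun ν _ => ?_
    congr 1
    apply Filter.EventuallyEq.fderiv_eq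
    filter_upwards [hev] with t ht
    simp only [hF_def, hG_def, ht]
  -- per-ν computation
  have hkey : ∀ ν : Fin (n + 1),
      fderiv ℝ (fun t => (∑ i, F i ν t * J t i μ)
          - (if ν = μ then L (G t) else 0)) x (Pi.single ν 1)
      = (∑ i, (F i ν x * s2 (Pi.single ν 1) (Pi.single μ 1) i
            + J x i μ * fderiv ℝ (F i ν) x (Pi.single ν 1)))
        - (if ν = μ then fderiv ℝ (fun t => L (G t)) x (Pi.single μ 1) else 0) := by
    intro ν
    have hsumd : DifferentiableAt ℝ (fun t => ∑ i, F i ν t * J t i μ) x :=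
      DifferentiableAt.fun_sum fun i _ => (hFd i ν).mul (hJcompd i μ)
    have hsum : fderiv ℝ (fun t => ∑ i, F i ν t * J t i μ) x (Pi.single ν 1)
        = ∑ i, (F i ν x * s2 (Pi.single ν 1) (Pi.single μ 1) i
            + J x i μ * fderiv ℝ (F i ν) x (Pi.single ν 1)) := by
      rw [fderiv_fun_sum (A := fun i t => F i ν t * J t i μ) (fun i _ => ((hFd i ν).mul (hJcompd i μ) :
          DifferentiableAt ℝ (fun t => F i ν t * J t i μ) x)),
        ContinuousLinearMap.sum_apply]
      refine Finset.sum_congr rfl fun i _ => ?_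
      rw [fderiv_fun_mul (hFd i ν) (hJcompd i μ)]
      simp only [ContinuousLinearMap.add_apply, ContinuousLinearMap.smul_apply,
        smul_eq_mul, hJd i μ (Pi.single ν 1)]
    by_cases hνμ : ν = μ
    · subst hνμ
      simp only [eq_self_iff_true, if_true]
      rw [fderiv_fun_sub hsumd hLGd, ContinuousLinearMap.sub_apply, hsum]
    · simp only [if_neg hνμ, sub_zero]
      exact hsum
  -- derivative of J as a map
  have hfderivJap : ∀ v, fderiv ℝ J x v = fun i ν => s2 v (Pi.single ν 1) i := by
    intro v
    have h1 : fderiv ℝ J x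
        = ContinuousLinearMap.pi (fun i => fderiv ℝ (fun t => J t i) x) :=
      fderiv_pi (fun i => (contDiffAt_pi.1 hJC i).differentiableAt hone)
    funext i ν
    have h2 : fderiv ℝ (fun t => J t i) x
        = ContinuousLinearMap.pi (fun ν => fderiv ℝ (fun t => J t i ν) x) :=
      fderiv_pi (fun ν => hJcompd i ν)
    rw [h1]
    simp only [ContinuousLinearMap.pi_apply]
    rw [h2]
    simp only [ContinuousLinearMap.pi_apply, hJd]
  -- decomposition of the differential of L in the canonical basis
  have hsplit : ∀ (a : Fin m → ℝ) (b : Fin m → Fin (n + 1) → ℝ),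
      fderiv ℝ L (G x) (a, b)
        = (∑ i, a i * fderiv ℝ L (G x) (Pi.single i 1, 0))
          + ∑ i, ∑ ν, b i ν * fderiv ℝ L (G x) (0, Pi.single i (Pi.single ν 1)) := by
    intro a b
    have h1 : a = ∑ i, a i • (Pi.single i 1 : Fin m → ℝ) := by
      funext j
      simp [Finset.sum_apply, Pi.single_apply, mul_ite, Finset.sum_ite_eq,
        Finset.sum_ite_eq']
    have h2 : b = ∑ i, ∑ ν, b i ν •
        (Pi.single i (Pi.single ν 1) : Fin m → Fin (n + 1) → ℝ) := by
      funext j κ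
      simp [Finset.sum_apply, Pi.single_apply, ite_apply, mul_ite, mul_one, mul_zero,
        Finset.sum_ite_eq, Finset.sum_ite_eq']
    have ha : (a, b)
        = (∑ i, a i • ((Pi.single i 1 : Fin m → ℝ),
              (0 : Fin m → Fin (n + 1) → ℝ)))
          + ∑ i, ∑ ν, b i ν • ((0 : Fin m → ℝ),
              (Pi.single i (Pi.single ν 1) : Fin m → Fin (n + 1) → ℝ)) := by
      refine Prod.ext ?_ ?_ |>.symm
      · simp [Prod.fst_sum, ← h1]
      · simp [Prod.snd_sum, ← h2]
    rw [ha, map_add, map_sum]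
    rw [map_sum (fderiv ℝ L (G x) : _ →L[ℝ] ℝ)
      (fun i => ∑ ν, b i ν • ((0 : Fin m → ℝ),
        (Pi.single i (Pi.single ν 1) : Fin m → Fin (n + 1) → ℝ))) Finset.univ]
    congr 1
    · exact Finset.sum_congr rfl fun i _ => by rw [map_smul, smul_eq_mul]
    · refine Finset.sum_congr rfl fun i _ => ?_
      rw [map_sum (fderiv ℝ L (G x) : _ →L[ℝ] ℝ)
        (fun ν => b i ν • ((0 : Fin m → ℝ),
          (Pi.single i (Pi.single ν 1) : Fin m → Fin (n + 1) → ℝ))) Finset.univ]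
      exact Finset.sum_congr rfl fun ν _ => by rw [map_smul, smul_eq_mul]
  -- chain rule
  have hchain : fderiv ℝ (fun t => L (G t)) x (Pi.single μ 1)
      = (∑ i, J x i μ * fderiv ℝ L (G x) (Pi.single i 1, 0))
        + ∑ i, ∑ ν, s2 (Pi.single μ 1) (Pi.single ν 1) i * F i ν x := by
    have hDsx : DifferentiableAt ℝ s x := (hsd x hx).differentiableAt hone
    have hJdiffAt : DifferentiableAt ℝ J x := hJC.differentiableAt hone
    have hcomp : fderiv ℝ (fun t => L (G t)) x
        = (fderiv ℝ L (G x)).comp (fderiv ℝ G x) := by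
      have h := fderiv_comp x ((hL.differentiable hone) (G x)) hGd
      rw [show (fun t => L (G t)) = L ∘ G from rfl, h]
    rw [hcomp, ContinuousLinearMap.comp_apply]
    have hfG : fderiv ℝ G x = (fderiv ℝ s x).prod (fderiv ℝ J x) :=
      hDsx.fderiv_prodMk hJdiffAt
    rw [hfG, ContinuousLinearMap.prod_apply, hfderivJap, hsplit]
  -- transfer the goal summands to F, J, G
  have hgoalL : ∀ ν : Fin (n + 1),
      fderiv ℝ (fun t =>
          (∑ i, fderiv ℝ L (s t, jet1 n m s t)
              (0, Pi.single i (Pi.single ν 1)) * jet1 n m s t i μ)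
            - (if ν = μ then L (s t, jet1 n m s t) else 0)) x
      = fderiv ℝ (fun t => (∑ i, F i ν t * J t i μ)
            - (if ν = μ then L (G t) else 0)) x := by
    intro ν
    apply Filter.EventuallyEq.fderiv_eq
    filter_upwards [hev] with t ht
    simp only [hF_def, hG_def, ht]
  -- final assembly
  rw [hjetJ x hx]
  have hGx : (s x, J x) = G x := rfl
  rw [hGx]
  calc
    ∑ ν, fderiv ℝ (fun t =>
          (∑ i, fderiv ℝ L (s t, jet1 n m s t)
              (0, Pi.single i (Pi.single ν 1)) * jet1 n m s t i μ)
            - (if ν = μ then L (s t, jet1 n m s t) else 0)) x (Pi.single ν 1)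
      = ∑ ν, ((∑ i, (F i ν x * s2 (Pi.single ν 1) (Pi.single μ 1) i
            + J x i μ * fderiv ℝ (F i ν) x (Pi.single ν 1)))
          - (if ν = μ then fderiv ℝ (fun t => L (G t)) x (Pi.single μ 1) else 0)) := by
        refine Finset.sum_congr rfl fun ν _ => ?_
        rw [hgoalL ν, hkey ν]
    _ = ((∑ ν, ∑ i, F i ν x * s2 (Pi.single ν 1) (Pi.single μ 1) i)
        + ∑ ν, ∑ i, J x i μ * fderiv ℝ (F i ν) x (Pi.single ν 1))
        - fderiv ℝ (fun t => L (G t)) x (Pi.single μ 1) := by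
        rw [Finset.sum_sub_distrib,
          Finset.sum_ite_eq' Finset.univ μ
            (fun _ => fderiv ℝ (fun t => L (G t)) x (Pi.single μ 1)),
          if_pos (Finset.mem_univ μ)]
        congr 1
        rw [← Finset.sum_add_distrib]
        exact Finset.sum_congr rfl fun ν _ => Finset.sum_add_distrib
    _ = ∑ i, (Psrc i (G x) - fderiv ℝ L (G x) (Pi.single i 1, 0)) * J x i μ := by
        have eP : (∑ ν, ∑ i, F i ν x * s2 (Pi.single ν 1) (Pi.single μ 1) i)
            = ∑ i, ∑ ν, s2 (Pi.single μ 1) (Pi.single ν 1) i * F i ν x := by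
          rw [Finset.sum_comm]
          refine Finset.sum_congr rfl fun i _ => Finset.sum_congr rfl fun ν _ => ?_
          rw [congrFun (hsymm (Pi.single ν 1) (Pi.single μ 1)) i, mul_comm]
        have eQ : (∑ ν, ∑ i, J x i μ * fderiv ℝ (F i ν) x (Pi.single ν 1))
            = ∑ i, J x i μ * Psrc i (G x) := by
          rw [Finset.sum_comm]
          refine Finset.sum_congr rfl fun i _ => ?_
          rw [← Finset.mul_sum, hsol' i]
        rw [eP, eQ, hchain]
        have habc : ∀ A B C : ℝ, A + B - (C + A) = B - C := fun A B C => by ring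
        rw [habc, ← Finset.sum_sub_distrib]
        refine Finset.sum_congr rfl fun i _ => by ring
end
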